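/- arXiv:0711.3935 — 7 statements merged into one kernel-verified Lean document; each statement's English description precedes it below -/
import Mathlib

section
/- Fix an integer k ≥ 2. For integers i ≥ k+1 define ρ*_{k,i} = (k−1)/((i−1)(i−2)), and for α ∈ [0,1] define f_{k,i}(α) = Σ_{j=k}^{i−1} binom(i−1, j) α^j (1−α)^{i−1−j}. Then for every real α ∈ [0,1], the series Σ_{i=k+1}^∞ ρ*_{k,i} f_{k,i}(α) converges and its sum equals α. -/
open Filter Topology


private noncomputable def Ffun (k : ℕ) (α : ℝ) (p : {i : ℕ // k + 1 ≤ i} × ℕ) : ℝ :=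
  if k ≤ p.2 ∧ p.2 ≤ (p.1 : ℕ) - 1 then
    (((k : ℝ) - 1) / ((((p.1 : ℕ) : ℝ) - 1) * (((p.1 : ℕ) : ℝ) - 2))) *
      ((((p.1 : ℕ) - 1).choose p.2 : ℝ) * α ^ p.2 * (1 - α) ^ ((p.1 : ℕ) - 1 - p.2))
  else 0

private def gfun (k : ℕ) (p : ℕ × ℕ) : {i : ℕ // k + 1 ≤ i} × ℕ :=
  (⟨p.1 + p.2 + (k + 1), by omega⟩, p.1 + k)

private lemma aux_key (m n r : ℕ) :
    ((n + r + (m + 2)).choose (n + (m + 2)) : ℝ) * (((n:ℝ) + ((m:ℝ) + 2)) * ((n:ℝ) + ((m:ℝ) + 2) - 1)) =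
      ((r + (n + m)).choose (n + m) : ℝ) * (((n:ℝ) + (r:ℝ) + ((m:ℝ) + 2)) * ((n:ℝ) + (r:ℝ) + ((m:ℝ) + 2) - 1)) := by
  have h1 := Nat.add_one_mul_choose_eq (n + m + 1 + r) (n + m + 1)
  have h2 := Nat.add_one_mul_choose_eq (n + m + r) (n + m)
  rw [show n + m + 1 + r + 1 = n + r + (m + 2) by omega,
      show n + m + 1 + 1 = n + (m + 2) by omega] at h1
  rw [show n + m + r + 1 = n + m + 1 + r by omega,
      show n + m + r = r + (n + m) by omega] at h2
  have h1' : ((n:ℝ) + r + (m + 2)) * ((n + m + 1 + r).choose (n + m + 1) : ℝ) =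
      ((n + r + (m + 2)).choose (n + (m + 2)) : ℝ) * ((n:ℝ) + (m + 2)) := by
    exact_mod_cast congrArg (Nat.cast (R := ℝ)) h1
  have h2' : ((n:ℝ) + m + 1 + r) * ((r + (n + m)).choose (n + m) : ℝ) =
      ((n + m + 1 + r).choose (n + m + 1) : ℝ) * ((n:ℝ) + m + 1) := by
    exact_mod_cast congrArg (Nat.cast (R := ℝ)) h2
  linear_combination (-((n:ℝ) + m + 1)) * h1' - ((n:ℝ) + r + (m + 2)) * h2'

private lemma hAe (m : ℕ) (α : ℝ) (n r : ℕ) :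
    Ffun (m + 2) α (gfun (m + 2) (n, r)) =
      ((((m:ℝ) + 2) - 1) * α ^ (n + (m + 2))) / (((n : ℝ) + ((m:ℝ) + 2)) * ((n : ℝ) + ((m:ℝ) + 2) - 1)) *
        (((r + (n + m)).choose (n + m) : ℝ) * (1 - α) ^ r) := by
  have key := aux_key m n r
  unfold Ffun gfun
  rw [if_pos (by constructor <;> simp <;> omega)]
  simp only []
  rw [show n + r + (m + 2 + 1) - 1 = n + r + (m + 2) by omega]
  rw [show n + r + (m + 2) - (n + (m + 2)) = r by omega]
  push_cast
  have h0n : (0:ℝ) ≤ (n:ℝ) := Nat.cast_nonneg n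
  have h0r : (0:ℝ) ≤ (r:ℝ) := Nat.cast_nonneg r
  have h0m : (0:ℝ) ≤ (m:ℝ) := Nat.cast_nonneg m
  have hd1 : ((n:ℝ) + (r:ℝ) + ((m:ℝ) + 2) - 1) ≠ 0 := by nlinarith
  have hd2 : ((n:ℝ) + (r:ℝ) + ((m:ℝ) + 2)) ≠ 0 := by nlinarith
  have hd3 : ((n:ℝ) + ((m:ℝ) + 2) - 1) ≠ 0 := by nlinarith
  have hd4 : ((n:ℝ) + ((m:ℝ) + 2)) ≠ 0 := by nlinarith
  have hd5 : ((n:ℝ) + (r:ℝ) + ((m:ℝ) + 2 + 1) - 1) ≠ 0 := by nlinarith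
  have hd6 : ((n:ℝ) + (r:ℝ) + ((m:ℝ) + 2 + 1) - 2) ≠ 0 := by nlinarith
  field_simp
  linear_combination (((m:ℝ) + 1) * α ^ (n + (m + 2)) * (1 - α) ^ r) * key

private lemma stepA (m : ℕ) {α : ℝ} (h0 : 0 < α) (h1 : α ≤ 1) (n : ℕ) :
    HasSum (fun r : ℕ => Ffun (m + 2) α (gfun (m + 2) (n, r)))
      ((((m:ℝ) + 1) * α) * (((n:ℝ) + ((m:ℝ) + 1))⁻¹ - (((n + 1 : ℕ) : ℝ) + ((m:ℝ) + 1))⁻¹)) := by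
  have hx : ‖1 - α‖ < 1 := by rw [Real.norm_eq_abs, abs_lt]; constructor <;> linarith
  have geom := (hasSum_choose_mul_geometric_of_norm_lt_one (𝕜 := ℝ) (n + m) hx).mul_left
      (((((m:ℝ) + 2) - 1) * α ^ (n + (m + 2))) / (((n : ℝ) + ((m:ℝ) + 2)) * ((n : ℝ) + ((m:ℝ) + 2) - 1)))
  have hval : ((((m:ℝ) + 2) - 1) * α ^ (n + (m + 2))) / (((n : ℝ) + ((m:ℝ) + 2)) * ((n : ℝ) + ((m:ℝ) + 2) - 1)) *
      (1 / (1 - (1 - α)) ^ (n + m + 1)) =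
      (((m:ℝ) + 1) * α) * (((n:ℝ) + ((m:ℝ) + 1))⁻¹ - (((n + 1 : ℕ) : ℝ) + ((m:ℝ) + 1))⁻¹) := by
    have hα : α ≠ 0 := ne_of_gt h0
    rw [show (1:ℝ) - (1 - α) = α by ring, show n + (m + 2) = (n + m + 1) + 1 by omega, pow_succ]
    have hp : α ^ (n + m + 1) ≠ 0 := pow_ne_zero _ hα
    have h0n : (0:ℝ) ≤ (n:ℝ) := Nat.cast_nonneg n
    have h0m : (0:ℝ) ≤ (m:ℝ) := Nat.cast_nonneg m
    have hd3 : ((n:ℝ) + ((m:ℝ) + 2) - 1) ≠ 0 := by nlinarith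
    have hd4 : ((n:ℝ) + ((m:ℝ) + 2)) ≠ 0 := by nlinarith
    have hd7 : ((n:ℝ) + ((m:ℝ) + 1)) ≠ 0 := by nlinarith
    push_cast
    have hd8 : ((n:ℝ) + 1 + ((m:ℝ) + 1)) ≠ 0 := by nlinarith
    field_simp
    ring
  rw [show (fun r : ℕ => Ffun (m + 2) α (gfun (m + 2) (n, r))) =
      (fun r : ℕ => ((((m:ℝ) + 2) - 1) * α ^ (n + (m + 2))) / (((n : ℝ) + ((m:ℝ) + 2)) * ((n : ℝ) + ((m:ℝ) + 2) - 1)) *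
        (((r + (n + m)).choose (n + m) : ℝ) * (1 - α) ^ r)) from funext (hAe m α n), ← hval]
  exact geom

private lemma stepB (m : ℕ) {α : ℝ} (h0 : 0 < α) :
    HasSum (fun n : ℕ => (((m:ℝ) + 1) * α) *
      (((n:ℝ) + ((m:ℝ) + 1))⁻¹ - (((n + 1 : ℕ) : ℝ) + ((m:ℝ) + 1))⁻¹)) α := by
  set G : ℕ → ℝ := fun j => ((j:ℝ) + ((m:ℝ) + 1))⁻¹ with hG
  have hpos : ∀ j : ℕ, (0:ℝ) < (j:ℝ) + ((m:ℝ) + 1) := fun j => by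
    have := Nat.cast_nonneg (α := ℝ) j
    have := Nat.cast_nonneg (α := ℝ) m
    linarith
  have htel : HasSum (fun n : ℕ => G n - G (n + 1)) (G 0) := by
    have hnn : ∀ n : ℕ, 0 ≤ G n - G (n + 1) := fun n => by
      have h1 := hpos n
      have h2 := hpos (n + 1)
      have : G (n + 1) ≤ G n := by
        apply inv_anti₀ h1
        push_cast
        linarith
      linarith
    rw [hasSum_iff_tendsto_nat_of_nonneg hnn]
    have hps : ∀ N, ∑ i ∈ Finset.range N, (G i - G (i + 1)) = G 0 - G N :=
      fun N => Finset.sum_range_sub' G N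
    have hG0 : Tendsto G atTop (𝓝 0) := by
      have h1 : Tendsto (fun j : ℕ => (j:ℝ) + ((m:ℝ) + 1)) atTop atTop :=
        tendsto_atTop_add_const_right _ _ tendsto_natCast_atTop_atTop
      exact h1.inv_tendsto_atTop
    have : Tendsto (fun N : ℕ => G 0 - G N) atTop (𝓝 (G 0 - 0)) := tendsto_const_nhds.sub hG0
    rw [sub_zero] at this
    exact this.congr fun N => (hps N).symm
  have := htel.mul_left (((m:ℝ) + 1) * α)
  have hval : (((m:ℝ) + 1) * α) * G 0 = α := by
    have hm1 : ((m:ℝ) + 1) ≠ 0 := by positivity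
    simp [hG]
    field_simp
  rw [hval] at this
  exact this


/-- Lemma 4, last assertion: with `ρ*_{k,i} = (k-1)/((i-1)(i-2))` and
`f_{k,i}(α) = Σ_{j=k}^{i-1} C(i-1,j) α^j (1-α)^{i-1-j}`, for every `α ∈ [0,1]`,
`Σ_{i=k+1}^∞ ρ*_{k,i} f_{k,i}(α) = α` (the series converges with sum `α`). -/
theorem stmt_7 (k : ℕ) (hk : 2 ≤ k) (α : ℝ) (hα0 : 0 ≤ α) (hα1 : α ≤ 1) :
    HasSum (fun i : {i : ℕ // k + 1 ≤ i} =>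
      (((k : ℝ) - 1) / ((((i : ℕ) : ℝ) - 1) * (((i : ℕ) : ℝ) - 2))) *
        ∑ j ∈ Finset.Icc k ((i : ℕ) - 1),
          (((i : ℕ) - 1).choose j : ℝ) * α ^ j * (1 - α) ^ ((i : ℕ) - 1 - j)) α := by
  rcases hα0.lt_or_eq with hpos | h0
  swap
  · rw [← h0]
    convert hasSum_zero with i
    rw [Finset.sum_eq_zero, mul_zero]
    intro j hj
    rw [Finset.mem_Icc] at hj
    rw [zero_pow (by omega), mul_zero, zero_mul]
  obtain ⟨m, rfl⟩ : ∃ m, k = m + 2 := ⟨k - 2, by omega⟩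
  have hAfib : ∀ n : ℕ, HasSum (fun r : ℕ => Ffun (m + 2) α (gfun (m + 2) (n, r)))
      ((((m:ℝ) + 1) * α) * (((n:ℝ) + ((m:ℝ) + 1))⁻¹ - (((n + 1 : ℕ) : ℝ) + ((m:ℝ) + 1))⁻¹)) :=
    fun n => stepA m hpos hα1 n
  have hc := stepB m (α := α) hpos
  have hAnn : (0 : ℕ × ℕ → ℝ) ≤ fun p => Ffun (m + 2) α (gfun (m + 2) p) := by
    intro p
    obtain ⟨n, r⟩ := p
    simp only [Pi.zero_apply]
    rw [hAe m α n r]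
    have h0n : (0:ℝ) ≤ (n:ℝ) := Nat.cast_nonneg n
    have h0m : (0:ℝ) ≤ (m:ℝ) := Nat.cast_nonneg m
    apply mul_nonneg
    · apply div_nonneg
      · apply mul_nonneg (by linarith) (pow_nonneg hpos.le _)
      · apply mul_nonneg (by linarith) (by linarith)
    · exact mul_nonneg (Nat.cast_nonneg _) (pow_nonneg (by linarith) _)
  have hsumm : Summable (fun p : ℕ × ℕ => Ffun (m + 2) α (gfun (m + 2) p)) := by
    rw [summable_prod_of_nonneg hAnn]
    refine ⟨fun n => (hAfib n).summable, ?_⟩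
    have he : (fun n : ℕ => ∑' r, Ffun (m + 2) α (gfun (m + 2) (n, r))) =
        fun n : ℕ => (((m:ℝ) + 1) * α) *
          (((n:ℝ) + ((m:ℝ) + 1))⁻¹ - (((n + 1 : ℕ) : ℝ) + ((m:ℝ) + 1))⁻¹) :=
      funext fun n => (hAfib n).tsum_eq
    rw [he]
    exact hc.summable
  have hAsum : HasSum (fun p : ℕ × ℕ => Ffun (m + 2) α (gfun (m + 2) p)) α := by
    have h := hsumm.hasSum
    have ht : ∑' p : ℕ × ℕ, Ffun (m + 2) α (gfun (m + 2) p) = α := by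
      rw [Summable.tsum_prod' hsumm fun n => (hAfib n).summable]
      rw [tsum_congr fun n => (hAfib n).tsum_eq]
      exact hc.tsum_eq
    rwa [ht] at h
  have hginj : Function.Injective (gfun (m + 2)) := by
    rintro ⟨p1, p2⟩ ⟨q1, q2⟩ h
    have h1 : p1 + (m + 2) = q1 + (m + 2) := congrArg Prod.snd h
    have h2 : p1 + p2 + (m + 2 + 1) = q1 + q2 + (m + 2 + 1) :=
      congrArg (fun z => (z.1 : ℕ)) h
    simp only [Prod.mk.injEq]
    omega
  have hrange : ∀ x, x ∉ Set.range (gfun (m + 2)) → Ffun (m + 2) α x = 0 := by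
    rintro ⟨⟨i, hi⟩, j⟩ hx
    unfold Ffun
    dsimp only
    rw [if_neg]
    intro hcond
    refine hx ⟨(j - (m + 2), i - 1 - j), ?_⟩
    unfold gfun
    dsimp only
    refine Prod.ext (Subtype.ext ?_) ?_
    · show j - (m + 2) + (i - 1 - j) + (m + 2 + 1) = i
      omega
    · show j - (m + 2) + (m + 2) = j
      omega
  have hFsum : HasSum (Ffun (m + 2) α) α := (hginj.hasSum_iff hrange).mp hAsum
  refine hFsum.prod_fiberwise fun i => ?_
  have h0' : ∀ j ∉ Finset.Icc (m + 2) ((i : ℕ) - 1), Ffun (m + 2) α (i, j) = 0 := by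
    intro j hj
    rw [Finset.mem_Icc] at hj
    exact if_neg hj
  have hs := hasSum_sum_of_ne_finset_zero (L := SummationFilter.unconditional ℕ) h0'
  convert hs using 1
  rw [Finset.mul_sum]
  refine Finset.sum_congr rfl fun j hj => ?_
  rw [Finset.mem_Icc] at hj
  exact (if_pos hj).symm
end

section
/- Fix integers k ≥ 2 and b ≥ k+1. For integers i with k+1 ≤ i ≤ b define ρ*_{k,i} = (k−1)/((i−1)(i−2)), and for α ∈ [0,1] define f_{k,i}(α) = Σ_{j=k}^{i−1} binom(i−1, j) α^j (1−α)^{i−1−j}. Then for every real α with 0 < α ≤ 1, Σ_{i=k+1}^b ρ*_{k,i} f_{k,i}(α) < α. -/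
section Aux

lemma my_sum_Icc_eq_sum_range {M : Type*} [AddCommMonoid M] (f : ℕ → M) (a b : ℕ) :
    ∑ k ∈ Finset.Icc a b, f k = ∑ k ∈ Finset.range (b + 1 - a), f (a + k) :=
  Finset.sum_Ico_eq_sum_range f a (b + 1)

lemma my_choose2 (n r : ℕ) :
    (n + 2).choose (r + 2) * ((r + 1) * (r + 2)) = (n + 1) * (n + 2) * n.choose r := by
  have h1 : (n + 1) * n.choose r = (n + 1).choose (r + 1) * (r + 1) :=
    Nat.add_one_mul_choose_eq n r
  have h2 : (n + 2) * (n + 1).choose (r + 1) = (n + 2).choose (r + 2) * (r + 2) :=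
    Nat.add_one_mul_choose_eq (n + 1) (r + 1)
  calc (n + 2).choose (r + 2) * ((r + 1) * (r + 2))
      = ((n + 2).choose (r + 2) * (r + 2)) * (r + 1) := by ring
    _ = ((n + 2) * (n + 1).choose (r + 1)) * (r + 1) := by rw [← h2]
    _ = (n + 2) * ((n + 1).choose (r + 1) * (r + 1)) := by ring
    _ = (n + 2) * ((n + 1) * n.choose r) := by rw [← h1]
    _ = (n + 1) * (n + 2) * n.choose r := by ring

variable (κ : ℕ) (α : ℝ)

/-- the RHS term -/
noncomputable def Rt (m u : ℕ) : ℝ :=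
  (1 - ((κ:ℝ)+1)/((κ:ℝ)+u+2)) * (((κ+m+1).choose (κ+1+u) : ℝ)) * α^(κ+2+u) * (1-α)^(m-u)

/-- the T term -/
noncomputable def Tt (m w : ℕ) : ℝ :=
  (((κ:ℝ)+1)/(((κ:ℝ)+w+1)*((κ:ℝ)+w+2))) * (((κ+m+1).choose (κ+w) : ℝ)) * α^(κ+2+w) * (1-α)^(m+1-w)

/-- the LHS (g) term -/
noncomputable def Lt (v : ℕ) : ℝ :=
  (((κ:ℝ)+1)/(((κ:ℝ)+v+2)*((κ:ℝ)+v+1))) *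
    ∑ w ∈ Finset.range (v+1), (((κ+2+v).choose (κ+2+w) : ℝ)) * α^(κ+2+w) * (1-α)^(v-w)

lemma Tlem (m : ℕ) : Lt κ α (m+1) = ∑ w ∈ Finset.range (m+2), Tt κ α m w := by
  unfold Lt Tt
  rw [Finset.mul_sum]
  refine Finset.sum_congr rfl fun w hw => ?_
  have hw' : w ≤ m + 1 := by
    have := Finset.mem_range.mp hw; omega
  have hc : (((κ+m+1)+2).choose ((κ+w)+2) * (((κ+w) + 1) * ((κ+w) + 2)) : ℕ)
      = ((κ+m+1) + 1) * ((κ+m+1) + 2) * (κ+m+1).choose (κ+w) := my_choose2 (κ+m+1) (κ+w)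
  have h1 : κ + 2 + (m+1) = (κ+m+1)+2 := by omega
  have h2 : κ + 2 + w = (κ+w)+2 := by omega
  have hcR : (((κ+m+1)+2).choose ((κ+w)+2) : ℝ) * (((κ:ℝ)+w+1) * ((κ:ℝ)+w+2))
      = (((κ:ℝ)+m+2) * ((κ:ℝ)+m+3)) * ((κ+m+1).choose (κ+w) : ℝ) := by
    exact_mod_cast congrArg (Nat.cast : ℕ → ℝ) hc
  rw [h1]
  rw [show κ + 2 + w = (κ+w)+2 from by omega]
  push_cast
  have d1 : ((κ:ℝ)+w+1) ≠ 0 := by positivity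
  have d2 : ((κ:ℝ)+w+2) ≠ 0 := by positivity
  have d3 : ((κ:ℝ)+(m+1)+2) ≠ 0 := by positivity
  have d4 : ((κ:ℝ)+(m+1)+1) ≠ 0 := by positivity
  have key : (((κ+m+1)+2).choose ((κ+w)+2) : ℝ) / (((κ:ℝ)+(m+1)+2)*((κ:ℝ)+(m+1)+1))
      = ((κ+m+1).choose (κ+w) : ℝ) / (((κ:ℝ)+w+1) * ((κ:ℝ)+w+2)) := by
    rw [div_eq_div_iff (by positivity) (by positivity)]
    nlinarith [hcR]
  calc (((κ:ℝ)+1)/(((κ:ℝ)+(m+1)+2)*((κ:ℝ)+(m+1)+1))) *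
        ((((κ+m+1)+2).choose ((κ+w)+2) : ℝ) * α^((κ+w)+2) * (1-α)^((m+1)-w))
      = ((κ:ℝ)+1) * α^((κ+w)+2) * (1-α)^((m+1)-w) *
          ((((κ+m+1)+2).choose ((κ+w)+2) : ℝ) / (((κ:ℝ)+(m+1)+2)*((κ:ℝ)+(m+1)+1))) := by ring
    _ = ((κ:ℝ)+1) * α^((κ+w)+2) * (1-α)^((m+1)-w) *
          (((κ+m+1).choose (κ+w) : ℝ) / (((κ:ℝ)+w+1) * ((κ:ℝ)+w+2))) := by rw [key]
    _ = (((κ:ℝ)+1)/(((κ:ℝ)+w+1)*((κ:ℝ)+w+2))) * ((κ+m+1).choose (κ+w) : ℝ) *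
          α^((κ+w)+2) * (1-α)^(m+1-w) := by ring

end Aux

section Main
variable (κ : ℕ) (α : ℝ)

lemma steplem (m : ℕ) :
    ∑ u ∈ Finset.range (m+2), Rt κ α (m+1) u
      = (∑ u ∈ Finset.range (m+1), Rt κ α m u) + ∑ w ∈ Finset.range (m+2), Tt κ α m w := by
  have split : ∀ u ∈ Finset.range (m+2), Rt κ α (m+1) u
      = ((1 - ((κ:ℝ)+1)/((κ:ℝ)+u+2)) * (((κ+m+1).choose (κ+u) : ℝ)) * α^(κ+2+u) * (1-α)^(m+1-u))
      + ((1 - ((κ:ℝ)+1)/((κ:ℝ)+u+2)) * (((κ+m+1).choose ((κ+u)+1) : ℝ)) * α^(κ+2+u) * (1-α)^(m+1-u)) := by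
    intro u hu
    unfold Rt
    rw [show κ+(m+1)+1 = (κ+m+1)+1 from by omega, show κ+1+u = (κ+u)+1 from by omega,
      Nat.choose_succ_succ' (κ+m+1) (κ+u)]
    push_cast
    ring
  rw [Finset.sum_congr rfl split, Finset.sum_add_distrib]
  have hB : ∑ u ∈ Finset.range (m+2),
      ((1 - ((κ:ℝ)+1)/((κ:ℝ)+u+2)) * (((κ+m+1).choose ((κ+u)+1) : ℝ)) * α^(κ+2+u) * (1-α)^(m+1-u))
      = (1-α) * ∑ u ∈ Finset.range (m+1), Rt κ α m u := by
    rw [Finset.sum_range_succ]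
    have h0 : ((κ+m+1).choose ((κ+(m+1))+1) : ℝ) = 0 := by
      rw [Nat.choose_eq_zero_of_lt (by omega)]; simp
    rw [h0, Finset.mul_sum]
    simp only [mul_zero, zero_mul, mul_zero, add_zero]
    refine Finset.sum_congr rfl fun u hu => ?_
    have hu' : u ≤ m := Nat.lt_succ_iff.mp (Finset.mem_range.mp hu)
    unfold Rt
    rw [show m+1-u = (m-u)+1 from by omega, show κ+1+u = (κ+u)+1 from by omega, pow_succ]
    ring
  have hA : ∑ u ∈ Finset.range (m+2),
      ((1 - ((κ:ℝ)+1)/((κ:ℝ)+u+2)) * (((κ+m+1).choose (κ+u) : ℝ)) * α^(κ+2+u) * (1-α)^(m+1-u))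
      = α * (∑ u ∈ Finset.range (m+1), Rt κ α m u) + ∑ w ∈ Finset.range (m+2), Tt κ α m w := by
    rw [Finset.sum_range_succ' _ (m+1), Finset.sum_range_succ' (fun w => Tt κ α m w) (m+1),
      Finset.mul_sum]
    have e1 : ∀ u ∈ Finset.range (m+1),
        ((1 - ((κ:ℝ)+1)/((κ:ℝ)+((u+1 : ℕ) : ℝ)+2)) * (((κ+m+1).choose (κ+(u+1)) : ℝ)) * α^(κ+2+(u+1)) * (1-α)^(m+1-(u+1)))
        = α * Rt κ α m u + Tt κ α m (u+1) := by
      intro u hu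
      have hu' : u ≤ m := Nat.lt_succ_iff.mp (Finset.mem_range.mp hu)
      unfold Rt Tt
      rw [show κ+(u+1) = (κ+u)+1 from by omega, show m+1-(u+1) = m-u from by omega,
        show κ+2+(u+1) = (κ+2+u)+1 from by omega, show κ+1+u = (κ+u)+1 from by omega,
        pow_succ]
      have hcoef : (1 - ((κ:ℝ)+1)/((κ:ℝ)+(u+1)+2))
          = (1 - ((κ:ℝ)+1)/((κ:ℝ)+u+2)) + ((κ:ℝ)+1)/(((κ:ℝ)+(u+1)+1)*((κ:ℝ)+(u+1)+2)) := by
        have d1 : ((κ:ℝ)+u+2) ≠ 0 := by positivity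
        have d2 : ((κ:ℝ)+(u+1)+2) ≠ 0 := by positivity
        have d3 : ((κ:ℝ)+(u+1)+1) ≠ 0 := by push_cast; positivity
        field_simp
        ring
      push_cast
      push_cast at hcoef
      linear_combination (((κ+m+1).choose ((κ+u)+1) : ℝ)) * α^(κ+2+u) * α * (1-α)^(m-u) * hcoef
    have e0 : ((1 - ((κ:ℝ)+1)/((κ:ℝ)+(0:ℕ)+2)) * (((κ+m+1).choose (κ+0) : ℝ)) * α^(κ+2+0) * (1-α)^(m+1-0))
        = Tt κ α m 0 := by
      unfold Tt
      have hcoef : (1 - ((κ:ℝ)+1)/((κ:ℝ)+0+2))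
          = ((κ:ℝ)+1)/(((κ:ℝ)+0+1)*((κ:ℝ)+0+2)) := by
        have d1 : ((κ:ℝ)+2) ≠ 0 := by positivity
        have d2 : ((κ:ℝ)+1) ≠ 0 := by positivity
        field_simp
        ring
      rw [show κ+0 = κ from by omega, show m+1-0 = m+1 from rfl, show κ+2+0 = κ+2 from rfl]
      push_cast
      push_cast at hcoef
      linear_combination (((κ+m+1).choose κ : ℝ)) * α^(κ+2) * (1-α)^(m+1) * hcoef
    rw [Finset.sum_congr rfl e1, e0, Finset.sum_add_distrib]
    ring
  rw [hA, hB]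
  ring

lemma mainlem (m : ℕ) :
    ∑ v ∈ Finset.range (m+1), Lt κ α v = ∑ u ∈ Finset.range (m+1), Rt κ α m u := by
  induction m with
  | zero =>
    unfold Lt Rt
    have d1 : ((κ:ℝ)+1) ≠ 0 := by positivity
    have d2 : ((κ:ℝ)+2) ≠ 0 := by positivity
    simp only [Finset.sum_range_one, Nat.zero_add, Nat.add_zero, Nat.sub_self, Nat.choose_self,
      Nat.cast_one, Nat.cast_zero, pow_zero]
    field_simp
    ring
  | succ m ih =>
    rw [Finset.sum_range_succ, ih, Tlem, steplem]

end Main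

/-- Claim (ii) in the proof of Lemma 3: with `ρ*_{k,i} = (k-1)/((i-1)(i-2))` and
`f_{k,i}(α) = Σ_{j=k}^{i-1} C(i-1,j) α^j (1-α)^{i-1-j}`, for every `α ∈ (0,1]`,
`Σ_{i=k+1}^b ρ*_{k,i} f_{k,i}(α) < α`. -/
theorem stmt_9 (k b : ℕ) (hk : 2 ≤ k) (hb : k + 1 ≤ b)
    (α : ℝ) (hα0 : 0 < α) (hα1 : α ≤ 1) :
    ∑ i ∈ Finset.Icc (k + 1) b,
      (((k : ℝ) - 1) / (((i : ℝ) - 1) * ((i : ℝ) - 2))) *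
        ∑ j ∈ Finset.Icc k (i - 1),
          ((i - 1).choose j : ℝ) * α ^ j * (1 - α) ^ (i - 1 - j) < α := by
  obtain ⟨κ, rfl⟩ : ∃ κ, k = κ + 2 := ⟨k - 2, by omega⟩
  obtain ⟨m, rfl⟩ : ∃ m, b = κ + m + 3 := ⟨b - (κ + 3), by omega⟩
  have hconv : ∑ i ∈ Finset.Icc (κ + 2 + 1) (κ + m + 3),
      (((κ + 2 : ℕ) : ℝ) - 1) / (((i : ℝ) - 1) * ((i : ℝ) - 2)) *
        ∑ j ∈ Finset.Icc (κ + 2) (i - 1),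
          ((i - 1).choose j : ℝ) * α ^ j * (1 - α) ^ (i - 1 - j)
      = ∑ v ∈ Finset.range (m + 1), Lt κ α v := by
    rw [my_sum_Icc_eq_sum_range, show (κ + m + 3) + 1 - (κ + 2 + 1) = m + 1 from by omega]
    refine Finset.sum_congr rfl fun v hv => ?_
    unfold Lt
    rw [show κ + 2 + 1 + v - 1 = κ + 2 + v from by omega]
    have hinner : ∑ j ∈ Finset.Icc (κ + 2) (κ + 2 + v),
        ((κ + 2 + v).choose j : ℝ) * α ^ j * (1 - α) ^ (κ + 2 + v - j)
        = ∑ w ∈ Finset.range (v + 1),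
            ((κ + 2 + v).choose (κ + 2 + w) : ℝ) * α ^ (κ + 2 + w) * (1 - α) ^ (v - w) := by
      rw [my_sum_Icc_eq_sum_range, show (κ + 2 + v) + 1 - (κ + 2) = v + 1 from by omega]
      refine Finset.sum_congr rfl fun w hw => ?_
      rw [show κ + 2 + v - (κ + 2 + w) = v - w from by omega]
    rw [hinner]
    congr 1
    push_cast
    ring
  rw [hconv, mainlem]
  -- now bound the closed form
  set n := κ + m + 1 with hn
  have hβ : (0:ℝ) ≤ 1 - α := by linarith
  set c : ℝ := 1 - ((κ:ℝ)+1)/((κ:ℝ)+m+2) with hc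
  have hc0 : 0 ≤ c := by
    have : ((κ:ℝ)+1)/((κ:ℝ)+m+2) ≤ 1 := by
      rw [div_le_one (by positivity)]; linarith
    simp [hc]; linarith
  have hc1 : c < 1 := by
    have : 0 < ((κ:ℝ)+1)/((κ:ℝ)+m+2) := by positivity
    simp [hc]; linarith
  have hφ : ∀ j, (0:ℝ) ≤ (n.choose j : ℝ) * α ^ j * (1 - α) ^ (n - j) := by
    intro j; positivity
  have step1 : ∑ u ∈ Finset.range (m + 1), Rt κ α m u
      ≤ c * α * ∑ u ∈ Finset.range (m + 1),
          ((n.choose (κ+1+u) : ℝ) * α ^ (κ+1+u) * (1 - α) ^ (n - (κ+1+u))) := by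
    rw [Finset.mul_sum]
    refine Finset.sum_le_sum fun u hu => ?_
    have hu' : u ≤ m := Nat.lt_succ_iff.mp (Finset.mem_range.mp hu)
    unfold Rt
    have hcu : (1 - ((κ:ℝ)+1)/((κ:ℝ)+u+2)) ≤ c := by
      rw [hc]
      have hum : ((u:ℝ)) ≤ (m:ℝ) := Nat.cast_le.mpr hu'
      have : ((κ:ℝ)+1)/((κ:ℝ)+m+2) ≤ ((κ:ℝ)+1)/((κ:ℝ)+u+2) := by
        gcongr
        all_goals first
          | positivity
          | linarith
      linarith
    have hsub : n - (κ+1+u) = m - u := by omega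
    have hexp : κ + 2 + u = (κ+1+u) + 1 := by omega
    rw [hsub, hexp, pow_succ]
    calc (1 - ((κ:ℝ)+1)/((κ:ℝ)+u+2)) * ((n.choose (κ+1+u) : ℝ)) * (α ^ (κ+1+u) * α) * (1-α)^(m-u)
        ≤ c * ((n.choose (κ+1+u) : ℝ)) * (α ^ (κ+1+u) * α) * (1-α)^(m-u) := by
          have hnn : (0:ℝ) ≤ ((n.choose (κ+1+u) : ℝ)) * (α ^ (κ+1+u) * α) * (1-α)^(m-u) := by
            positivity
          nlinarith [hnn, hcu]
      _ = c * α * ((n.choose (κ+1+u) : ℝ) * α ^ (κ+1+u) * (1 - α) ^ (m - u)) := by ring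
  have step2 : ∑ u ∈ Finset.range (m + 1),
      ((n.choose (κ+1+u) : ℝ) * α ^ (κ+1+u) * (1 - α) ^ (n - (κ+1+u))) ≤ 1 := by
    have hsubset : ∑ u ∈ Finset.range (m + 1),
        ((n.choose (κ+1+u) : ℝ) * α ^ (κ+1+u) * (1 - α) ^ (n - (κ+1+u)))
        = ∑ j ∈ Finset.Icc (κ+1) n,
            ((n.choose j : ℝ) * α ^ j * (1 - α) ^ (n - j)) := by
      rw [my_sum_Icc_eq_sum_range
        (fun j => ((n.choose j : ℝ) * α ^ j * (1 - α) ^ (n - j))) (κ+1) n,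
        show n + 1 - (κ+1) = m + 1 from by omega]
    rw [hsubset]
    have hfull : ∑ j ∈ Finset.range (n + 1),
        ((n.choose j : ℝ) * α ^ j * (1 - α) ^ (n - j)) = 1 := by
      have h := add_pow α (1 - α) n
      simp only [add_sub_cancel, one_pow] at h
      calc ∑ j ∈ Finset.range (n + 1), ((n.choose j : ℝ) * α ^ j * (1 - α) ^ (n - j))
          = ∑ j ∈ Finset.range (n + 1), (α ^ j * (1 - α) ^ (n - j) * (n.choose j : ℝ)) :=
            Finset.sum_congr rfl fun j _ => by ring
        _ = 1 := h.symm
    calc ∑ j ∈ Finset.Icc (κ+1) n, ((n.choose j : ℝ) * α ^ j * (1 - α) ^ (n - j))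
        ≤ ∑ j ∈ Finset.range (n + 1), ((n.choose j : ℝ) * α ^ j * (1 - α) ^ (n - j)) := by
          refine Finset.sum_le_sum_of_subset_of_nonneg ?_ fun j _ _ => hφ j
          intro j hj
          simp only [Finset.mem_Icc] at hj
          simp only [Finset.mem_range]
          omega
      _ = 1 := hfull
  have hca : 0 ≤ c * α := by positivity
  calc ∑ u ∈ Finset.range (m + 1), Rt κ α m u
      ≤ c * α * ∑ u ∈ Finset.range (m + 1),
          ((n.choose (κ+1+u) : ℝ) * α ^ (κ+1+u) * (1 - α) ^ (n - (κ+1+u))) := step1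
    _ ≤ c * α * 1 := by nlinarith [step2, hca]
    _ = c * α := by ring
    _ < α := by nlinarith [hc1, hα0]
end

section
/- Let k ≥ 2 be an integer, C > 0 a real constant, and let F : [0,1] → [0,1] be a continuous nondecreasing function such that F(α) < α for every α ∈ (0,1] and F(α) ≤ C·α^k for every α ∈ [0,1]. Define the sequence α_0 = 1 and α_{t+1} = F(α_t) for t ≥ 0. Then for every real γ with 1 < γ < k there exists a constant A > 0 such that α_t ≤ exp(−A·γ^t) for all integers t ≥ 1. -/
/-- Scalar recursion lemma (the "standard calculus" step in the proof of
Lemma 3): if `F : [0,1] → [0,1]` is continuous, nondecreasing, satisfies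
`F(α) < α` on `(0,1]` and `F(α) ≤ C α^k` on `[0,1]`, then the sequence
`α_0 = 1`, `α_{t+1} = F(α_t)` satisfies `α_t ≤ exp(-A γ^t)` for some `A > 0`,
for any `1 < γ < k`. -/
theorem stmt_11 (k : ℕ) (hk : 2 ≤ k) (C : ℝ) (hC : 0 < C)
    (F : ℝ → ℝ) (hmaps : ∀ x ∈ Set.Icc (0 : ℝ) 1, F x ∈ Set.Icc (0 : ℝ) 1)
    (hcont : ContinuousOn F (Set.Icc 0 1))
    (hmono : MonotoneOn F (Set.Icc 0 1))
    (hlt : ∀ x ∈ Set.Ioc (0 : ℝ) 1, F x < x)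
    (hbound : ∀ x ∈ Set.Icc (0 : ℝ) 1, F x ≤ C * x ^ k)
    (α : ℕ → ℝ) (hα0 : α 0 = 1) (hrec : ∀ t, α (t + 1) = F (α t))
    (γ : ℝ) (hγ1 : 1 < γ) (hγk : γ < k) :
    ∃ A : ℝ, 0 < A ∧ ∀ t : ℕ, 1 ≤ t → α t ≤ Real.exp (-A * γ ^ t) := by
  have hγ0 : (0:ℝ) < γ := by linarith
  have hmem : ∀ t, α t ∈ Set.Icc (0:ℝ) 1 := by
    intro t
    induction t with
    | zero => simp [hα0]
    | succ n ih => rw [hrec]; exact hmaps _ ih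
  have hF0 : F 0 = 0 := by
    have h1 := (hmaps 0 (by norm_num)).1
    have h2 := hbound 0 (by norm_num)
    have hk0 : (0:ℝ) ^ k = 0 := zero_pow (by omega)
    rw [hk0, mul_zero] at h2
    linarith
  have hanti1 : ∀ t, α (t+1) ≤ α t := by
    intro t
    rw [hrec]
    rcases eq_or_lt_of_le (hmem t).1 with h | h
    · rw [← h, hF0]
    · exact le_of_lt (hlt _ ⟨h, (hmem t).2⟩)
  have hAnti : Antitone α := antitone_nat_of_succ_le hanti1
  -- choose ε
  set kγ : ℝ := (k:ℝ) - γ with hkγdef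
  have hkγpos : 0 < kγ := sub_pos.2 hγk
  set ε : ℝ := min (Real.exp (-1)) (C⁻¹ ^ kγ⁻¹) with hεdef
  have hεpos : 0 < ε := lt_min (Real.exp_pos _) (Real.rpow_pos_of_pos (inv_pos.2 hC) _)
  have hεlt1 : ε < 1 :=
    lt_of_le_of_lt (min_le_left _ _) (Real.exp_lt_one_iff.mpr (by norm_num))
  have hCε : C * ε ^ kγ ≤ 1 := by
    have h1 : ε ^ kγ ≤ (C⁻¹ ^ kγ⁻¹ : ℝ) ^ kγ :=
      Real.rpow_le_rpow hεpos.le (min_le_right _ _) hkγpos.le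
    have h2 : ((C⁻¹ : ℝ) ^ kγ⁻¹) ^ kγ = C⁻¹ := by
      rw [← Real.rpow_mul (inv_nonneg.2 hC.le), inv_mul_cancel₀ hkγpos.ne', Real.rpow_one]
    rw [h2] at h1
    calc C * ε ^ kγ ≤ C * C⁻¹ := by
          exact mul_le_mul_of_nonneg_left h1 hC.le
      _ = 1 := mul_inv_cancel₀ hC.ne'
  -- key contraction step
  have hstep : ∀ x : ℝ, 0 < x → x ≤ ε → F x ≤ x ^ γ := by
    intro x hx hxε
    have hx1 : x ≤ 1 := hxε.trans hεlt1.le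
    have hb := hbound x ⟨hx.le, hx1⟩
    have hxk : (x:ℝ) ^ k = x ^ γ * x ^ kγ := by
      rw [← Real.rpow_natCast x k, ← Real.rpow_add hx]
      norm_num [hkγdef]
    have h3 : x ^ kγ ≤ ε ^ kγ := Real.rpow_le_rpow hx.le hxε hkγpos.le
    have hxγ : (0:ℝ) ≤ x ^ γ := Real.rpow_nonneg hx.le γ
    have hxkγ : (0:ℝ) ≤ x ^ kγ := Real.rpow_nonneg hx.le kγ
    calc F x ≤ C * x ^ k := hb
      _ = x ^ γ * (C * x ^ kγ) := by rw [hxk]; ring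
      _ ≤ x ^ γ * (C * ε ^ kγ) := by
          apply mul_le_mul_of_nonneg_left _ hxγ
          exact mul_le_mul_of_nonneg_left h3 hC.le
      _ ≤ x ^ γ * 1 := mul_le_mul_of_nonneg_left hCε hxγ
      _ = x ^ γ := mul_one _
  -- compactness: uniform decrease on [ε, 1]
  have hεle1 : ε ≤ 1 := hεlt1.le
  have hsub : Set.Icc ε 1 ⊆ Set.Icc (0:ℝ) 1 := Set.Icc_subset_Icc hεpos.le le_rfl
  have hgcont : ContinuousOn (fun x => x - F x) (Set.Icc ε 1) :=
    continuousOn_id.sub (hcont.mono hsub)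
  obtain ⟨x0, hx0mem, hx0min⟩ :=
    (isCompact_Icc).exists_isMinOn (Set.nonempty_Icc.2 hεle1) hgcont
  set δ : ℝ := x0 - F x0 with hδdef
  have hδpos : 0 < δ :=
    sub_pos.2 (hlt x0 ⟨lt_of_lt_of_le hεpos hx0mem.1, hx0mem.2⟩)
  have hdec : ∀ x ∈ Set.Icc ε 1, F x ≤ x - δ := by
    intro x hx
    have h := hx0min hx
    simp only [Set.mem_setOf_eq] at h
    rw [hδdef]
    linarith
  -- the sequence eventually drops below ε
  have hT : ∃ T, α T ≤ ε := by
    by_contra h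
    push_neg at h
    have hbd : ∀ t : ℕ, α t ≤ 1 - t * δ := by
      intro t
      induction t with
      | zero => simp [hα0]
      | succ n ih =>
        have hm : α n ∈ Set.Icc ε 1 := ⟨(h n).le, (hmem n).2⟩
        have := hdec _ hm
        rw [hrec]
        push_cast
        linarith
    obtain ⟨n, hn⟩ := exists_nat_gt (1/δ)
    have h1 := hbd n
    have h2 := h n
    have h3 : (1:ℝ) < n * δ := by
      rw [div_lt_iff₀ hδpos] at hn; linarith
    linarith [hεpos]
  obtain ⟨T, hTε⟩ := hT
  -- degenerate case: α 1 = 0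
  by_cases hz : α 1 ≤ 0
  · have hα1 : α 1 = 0 := le_antisymm hz (hmem 1).1
    have hzero : ∀ s : ℕ, α (1 + s) = 0 := by
      intro s
      induction s with
      | zero => simpa using hα1
      | succ n ih =>
        have : (1 + (n+1)) = (1 + n) + 1 := by ring
        rw [this, hrec, ih, hF0]
    refine ⟨1, one_pos, fun t ht => ?_⟩
    obtain ⟨s, rfl⟩ := Nat.exists_eq_add_of_le ht
    rw [hzero s]
    exact (Real.exp_pos _).le
  push_neg at hz
  -- main case
  set a : ℝ := -Real.log ε with hadef
  have hloge : Real.log ε ≤ -1 := by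
    calc Real.log ε ≤ Real.log (Real.exp (-1)) :=
          Real.log_le_log hεpos (min_le_left _ _)
      _ = -1 := Real.log_exp _
  have hapos : 0 < a := by simp only [hadef]; linarith
  have hind : ∀ s : ℕ, α (T + s) ≤ Real.exp (-a * γ ^ s) := by
    intro s
    induction s with
    | zero =>
      simpa [hadef, Real.exp_log hεpos] using hTε
    | succ s ih =>
      have hγs : (1:ℝ) ≤ γ ^ s := one_le_pow₀ hγ1.le
      have hle : α (T + s) ≤ ε := by
        refine ih.trans ?_
        rw [show ε = Real.exp (-a) by rw [hadef, neg_neg, Real.exp_log hεpos]]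
        apply Real.exp_le_exp.mpr
        nlinarith
      have hTs : T + (s + 1) = (T + s) + 1 := by ring
      rcases eq_or_lt_of_le (hmem (T + s)).1 with h0 | h0
      · rw [hTs, hrec, ← h0, hF0]
        exact (Real.exp_pos _).le
      · have hs := hstep _ h0 hle
        calc α (T + (s+1)) = F (α (T + s)) := by rw [hTs, hrec]
          _ ≤ (α (T + s)) ^ γ := hs
          _ ≤ (Real.exp (-a * γ ^ s)) ^ γ :=
              Real.rpow_le_rpow (hmem _).1 ih hγ0.le
          _ = Real.exp (-a * γ ^ (s+1)) := by
              rw [← Real.exp_mul]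
              ring_nf
  -- assemble the constant A
  have hα1lt1 : α 1 < 1 := by
    rw [hrec, hα0]; exact hlt 1 (by norm_num)
  set L1 : ℝ := -Real.log (α 1) with hL1def
  have hL1pos : 0 < L1 := by
    have := Real.log_neg hz hα1lt1
    simp only [hL1def]; linarith
  have hγT : (0:ℝ) < γ ^ T := pow_pos hγ0 T
  set A : ℝ := min (a / γ ^ T) (L1 / γ ^ T) with hAdef
  have hApos : 0 < A := lt_min (div_pos hapos hγT) (div_pos hL1pos hγT)
  refine ⟨A, hApos, fun t ht => ?_⟩
  rcases le_or_gt T t with hTt | htT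
  · obtain ⟨s, rfl⟩ := Nat.exists_eq_add_of_le hTt
    refine (hind s).trans (Real.exp_le_exp.mpr ?_)
    have h1 : A * γ ^ (T + s) ≤ (a / γ ^ T) * γ ^ (T + s) :=
      mul_le_mul_of_nonneg_right (min_le_left _ _) (pow_nonneg hγ0.le _)
    have h2 : (a / γ ^ T) * γ ^ (T + s) = a * γ ^ s := by
      rw [pow_add]; field_simp
    have h3 : A * γ ^ (T + s) ≤ a * γ ^ s := h2 ▸ h1
    simp only [neg_mul]
    linarith
  · have h1 : α t ≤ α 1 := hAnti ht
    have h2 : α 1 = Real.exp (-L1) := by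
      rw [hL1def, neg_neg, Real.exp_log hz]
    have h3 : A * γ ^ t ≤ L1 := by
      have hγt : (0:ℝ) < γ ^ t := pow_pos hγ0 t
      have hpow : γ ^ t ≤ γ ^ T := pow_le_pow_right₀ hγ1.le htT.le
      calc A * γ ^ t ≤ (L1 / γ ^ T) * γ ^ t :=
            mul_le_mul_of_nonneg_right (min_le_right _ _) hγt.le
        _ ≤ (L1 / γ ^ T) * γ ^ T :=
            mul_le_mul_of_nonneg_left hpow (le_of_lt (div_pos hL1pos hγT))
        _ = L1 := by field_simp
    calc α t ≤ α 1 := h1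
      _ = Real.exp (-L1) := h2
      _ ≤ Real.exp (-A * γ ^ t) := Real.exp_le_exp.mpr (by linarith)
end

section
/- Let k ≥ 2 be an integer and let r be a real number with r < 1 − 1/k. For integers i ≥ k+1 define ρ*_{k,i} = (k−1)/((i−1)(i−2)), and for α ∈ [0,1] define f_{k,i}(α) = Σ_{j=k}^{i−1} binom(i−1, j) α^j (1−α)^{i−1−j}. Then there exist an integer b ≥ k+1 and real constants A > 0 and γ > 1 such that, setting ρ_i = ρ*_{k,i} for k+1 ≤ i ≤ b and ρ_k = 1 − Σ_{i=k+1}^b ρ*_{k,i}, the following hold: (i) ρ_k ≥ 0 (so the ρ_i form a probability distribution on {k, …, b}); (ii) 1 − 2·Σ_{i=k}^b ρ_i/i ≥ r; and (iii) the sequence defined by α_0 = 1 and α_{t+1} = Σ_{i=k+1}^b ρ_i f_{k,i}(α_t) satisfies α_t ≤ exp(−A·γ^t) for all integers t ≥ 1. -/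
noncomputable def tailF (x : ℝ) (s n : ℕ) : ℝ :=
  ∑ j ∈ Finset.Icc s n, (n.choose j : ℝ) * x ^ j * (1 - x) ^ (n - j)

lemma tailF_succ (x : ℝ) (s n : ℕ) (hs : 1 ≤ s) (hsn : s ≤ n + 1) :
    tailF x s (n + 1)
      = tailF x s n + (n.choose (s - 1) : ℝ) * x ^ s * (1 - x) ^ (n + 1 - s) := by
  unfold tailF
  have hsplit : ∀ j ∈ Finset.Icc s (n+1),
      ((n+1).choose j : ℝ) * x ^ j * (1 - x) ^ (n + 1 - j)
      = (n.choose j : ℝ) * x ^ j * (1 - x) ^ (n + 1 - j)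
        + (n.choose (j-1) : ℝ) * x ^ j * (1 - x) ^ (n + 1 - j) := by
    intro j hj
    simp only [Finset.mem_Icc] at hj
    obtain ⟨j, rfl⟩ : ∃ m, j = m + 1 := ⟨j - 1, by omega⟩
    rw [Nat.choose_succ_succ']
    push_cast
    ring
  rw [Finset.sum_congr rfl hsplit, Finset.sum_add_distrib]
  have hA : ∑ j ∈ Finset.Icc s (n+1), (n.choose j : ℝ) * x ^ j * (1 - x) ^ (n + 1 - j)
      = (1 - x) * ∑ j ∈ Finset.Icc s n, (n.choose j : ℝ) * x ^ j * (1 - x) ^ (n - j) := by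
    rw [Finset.sum_Icc_succ_top hsn, Nat.choose_succ_self, Finset.mul_sum]
    simp only [Nat.cast_zero, zero_mul]
    rw [add_zero]
    refine Finset.sum_congr rfl ?_
    intro j hj
    simp only [Finset.mem_Icc] at hj
    have : n + 1 - j = (n - j) + 1 := by omega
    rw [this]
    ring
  have hB : ∑ j ∈ Finset.Icc s (n+1), (n.choose (j-1) : ℝ) * x ^ j * (1 - x) ^ (n + 1 - j)
      = x * ∑ j ∈ Finset.Icc (s-1) n, (n.choose j : ℝ) * x ^ j * (1 - x) ^ (n - j) := by
    have hmap : Finset.Icc s (n+1) = (Finset.Icc (s-1) n).map (addRightEmbedding 1) := by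
      rw [Finset.map_add_right_Icc]
      congr 1 <;> omega
    rw [hmap, Finset.sum_map, Finset.mul_sum]
    refine Finset.sum_congr rfl ?_
    intro j hj
    simp only [Finset.mem_Icc] at hj
    simp only [addRightEmbedding, Function.Embedding.coeFn_mk]
    have h1 : j + 1 - 1 = j := by omega
    have h2 : n + 1 - (j + 1) = n - j := by omega
    rw [h1, h2]
    ring
  rw [hA, hB]
  have hpeel : ∑ j ∈ Finset.Icc (s-1) n, (n.choose j : ℝ) * x ^ j * (1 - x) ^ (n - j)
      = (n.choose (s-1) : ℝ) * x ^ (s-1) * (1 - x) ^ (n - (s-1))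
        + ∑ j ∈ Finset.Icc s n, (n.choose j : ℝ) * x ^ j * (1 - x) ^ (n - j) := by
    have : Finset.Icc (s-1) n = insert (s-1) (Finset.Icc s n) := by
      ext j
      simp only [Finset.mem_insert, Finset.mem_Icc]
      omega
    rw [this, Finset.sum_insert]
    simp only [Finset.mem_Icc]
    omega
  rw [hpeel]
  have hx : x ^ s = x * x ^ (s - 1) := by
    conv_lhs => rw [show s = (s-1) + 1 by omega]
    ring
  have he : n + 1 - s = n - (s - 1) := by omega
  rw [hx, he]
  ring

lemma tailF_nonneg {x : ℝ} (hx0 : 0 ≤ x) (hx1 : x ≤ 1) (s n : ℕ) : 0 ≤ tailF x s n := by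
  refine Finset.sum_nonneg fun j _ => ?_
  have : (0:ℝ) ≤ 1 - x := by linarith
  positivity

lemma sum_Icc_zero (x : ℝ) (n : ℕ) :
    ∑ j ∈ Finset.Icc 0 n, (n.choose j : ℝ) * x ^ j * (1 - x) ^ (n - j) = 1 := by
  have h := add_pow x (1 - x) n
  simp only [add_sub_cancel, one_pow] at h
  rw [show Finset.Icc 0 n = Finset.range (n+1) by ext j; simp]
  calc ∑ j ∈ Finset.range (n+1), (n.choose j : ℝ) * x ^ j * (1 - x) ^ (n - j)
      = ∑ j ∈ Finset.range (n+1), x ^ j * (1 - x) ^ (n - j) * (n.choose j : ℝ) := by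
        refine Finset.sum_congr rfl fun j _ => by ring
    _ = 1 := by rw [← h]

lemma tailF_le_one_sub {x : ℝ} (hx0 : 0 ≤ x) (hx1 : x ≤ 1) {s : ℕ} (hs : 1 ≤ s) (n : ℕ) :
    tailF x s n ≤ 1 - (1 - x) ^ n := by
  have hsub : tailF x s n ≤ tailF x 1 n := by
    refine Finset.sum_le_sum_of_subset_of_nonneg ?_ ?_
    · intro j hj; simp only [Finset.mem_Icc] at *; omega
    · intro j _ _
      have : (0:ℝ) ≤ 1 - x := by linarith
      positivity
  refine hsub.trans ?_
  have h0 : tailF x 0 n = 1 := sum_Icc_zero x n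
  have hins : Finset.Icc 0 n = insert 0 (Finset.Icc 1 n) := by
    ext j; simp only [Finset.mem_insert, Finset.mem_Icc]; omega
  unfold tailF at h0 ⊢
  rw [hins, Finset.sum_insert (by simp)] at h0
  simp only [Nat.choose_zero_right, Nat.cast_one, pow_zero, one_mul, Nat.sub_zero] at h0
  linarith

lemma tailF_le_one {x : ℝ} (hx0 : 0 ≤ x) (hx1 : x ≤ 1) {s : ℕ} (hs : 1 ≤ s) (n : ℕ) :
    tailF x s n ≤ 1 := by
  have h1 := tailF_le_one_sub hx0 hx1 hs n
  have h1x : (0:ℝ) ≤ 1 - x := by linarith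
  have h2 : (0:ℝ) ≤ (1 - x)^n := by positivity
  linarith

lemma tailF_one {s n : ℕ} (hsn : s ≤ n) : tailF 1 s n = 1 := by
  unfold tailF
  rw [Finset.sum_eq_single n]
  · simp
  · intro j hj hne
    simp only [Finset.mem_Icc] at hj
    have : (0:ℝ) ^ (n - j) = 0 := by
      apply zero_pow; omega
    simp only [sub_self, this, mul_zero]
  · intro h
    simp only [Finset.mem_Icc] at h
    omega

lemma tailF_le_pow {x : ℝ} (hx0 : 0 ≤ x) (hx1 : x ≤ 1) (s n : ℕ) :
    tailF x s n ≤ 2 ^ n * x ^ s := by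
  have h1x : (0:ℝ) ≤ 1 - x := by linarith
  calc tailF x s n ≤ ∑ j ∈ Finset.Icc s n, (n.choose j : ℝ) * x ^ s := by
        refine Finset.sum_le_sum fun j hj => ?_
        simp only [Finset.mem_Icc] at hj
        have h2 : x ^ j ≤ x ^ s := pow_le_pow_of_le_one hx0 hx1 hj.1
        have h3 : (1 - x) ^ (n - j) ≤ 1 := pow_le_one₀ h1x (by linarith)
        have hc : (0:ℝ) ≤ (n.choose j : ℝ) := Nat.cast_nonneg _
        calc (n.choose j : ℝ) * x ^ j * (1 - x) ^ (n - j)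
            ≤ (n.choose j : ℝ) * x ^ j * 1 := by
              apply mul_le_mul_of_nonneg_left h3; positivity
          _ = (n.choose j : ℝ) * x ^ j := by ring
          _ ≤ (n.choose j : ℝ) * x ^ s := by
              apply mul_le_mul_of_nonneg_left h2 hc
    _ = (∑ j ∈ Finset.Icc s n, (n.choose j : ℝ)) * x ^ s := by rw [Finset.sum_mul]
    _ ≤ 2 ^ n * x ^ s := by
        have hxs : (0:ℝ) ≤ x ^ s := by positivity
        refine mul_le_mul_of_nonneg_right ?_ hxs
        have : ∑ j ∈ Finset.Icc s n, (n.choose j : ℝ) ≤ ∑ j ∈ Finset.range (n+1), (n.choose j : ℝ) := by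
          refine Finset.sum_le_sum_of_subset_of_nonneg ?_ (fun j _ _ => Nat.cast_nonneg _)
          intro j hj; simp only [Finset.mem_Icc, Finset.mem_range] at *; omega
        refine this.trans ?_
        rw [← Nat.cast_sum]
        rw [Nat.sum_range_choose]
        push_cast
        norm_num

lemma telescope1 (k : ℕ) (hk : 2 ≤ k) :
    ∀ b : ℕ, k ≤ b →
      ∑ i ∈ Finset.Icc (k + 1) b, ((k : ℝ) - 1) / (((i : ℝ) - 1) * ((i : ℝ) - 2))
        = 1 - ((k : ℝ) - 1) / ((b : ℝ) - 1) := by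
  intro b hb
  induction b, hb using Nat.le_induction with
  | base =>
      rw [Finset.Icc_eq_empty (by omega)]
      have : ((k:ℝ) - 1) ≠ 0 := by
        have : (2:ℝ) ≤ (k:ℝ) := by exact_mod_cast hk
        linarith
      field_simp
      simp
  | succ b hb ih =>
      rw [Finset.sum_Icc_succ_top (by omega), ih]
      have hb2 : (2:ℝ) ≤ (b:ℝ) := by
        have : (2:ℕ) ≤ b := by omega
        exact_mod_cast this
      have h1 : ((b:ℝ) - 1) ≠ 0 := by linarith
      have h2 : ((b:ℝ) + 1 - 1) ≠ 0 := by linarith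
      have h3 : ((b:ℝ) + 1 - 2) ≠ 0 := by linarith
      push_cast
      field_simp
      ring

lemma telescope2 (k : ℕ) (hk : 2 ≤ k) :
    ∀ b : ℕ, k ≤ b →
      ∑ i ∈ Finset.Icc (k + 1) b,
          ((k : ℝ) - 1) / (((i : ℝ) - 1) * ((i : ℝ) - 2)) / (i : ℝ)
        = 1 / (2 * (k:ℝ)) - ((k : ℝ) - 1) / (2 * (b : ℝ) * ((b : ℝ) - 1)) := by
  intro b hb
  induction b, hb using Nat.le_induction with
  | base =>
      rw [Finset.Icc_eq_empty (by omega)]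
      have hk2 : (2:ℝ) ≤ (k:ℝ) := by exact_mod_cast hk
      have h1 : ((k:ℝ) - 1) ≠ 0 := by linarith
      have h2 : (k:ℝ) ≠ 0 := by linarith
      field_simp
      simp
  | succ b hb ih =>
      rw [Finset.sum_Icc_succ_top (by omega), ih]
      have hb2 : (2:ℝ) ≤ (b:ℝ) := by
        have : (2:ℕ) ≤ b := by omega
        exact_mod_cast this
      have h1 : ((b:ℝ) - 1) ≠ 0 := by linarith
      have h2 : (b:ℝ) ≠ 0 := by linarith
      have h3 : ((b:ℝ) + 1 - 1) ≠ 0 := by linarith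
      have h4 : ((b:ℝ) + 1 - 2) ≠ 0 := by linarith
      have h5 : ((b:ℝ) + 1) ≠ 0 := by linarith
      push_cast
      field_simp
      ring

lemma tailF_self (x : ℝ) (n : ℕ) : tailF x n n = x ^ n := by
  unfold tailF
  rw [Finset.Icc_self, Finset.sum_singleton]
  simp

lemma main_identity (k : ℕ) (hk : 2 ≤ k) (x : ℝ) :
    ∀ b : ℕ, k + 1 ≤ b →
      ∑ i ∈ Finset.Icc (k + 1) b,
          ((k : ℝ) - 1) / (((i : ℝ) - 1) * ((i : ℝ) - 2)) * tailF x k (i - 1)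
        = x * tailF x (k - 1) (b - 2)
          - ((k : ℝ) - 1) / ((b : ℝ) - 1) * tailF x k (b - 1) := by
  intro b hb
  induction b, hb using Nat.le_induction with
  | base =>
      rw [Finset.Icc_self, Finset.sum_singleton]
      have e1 : k + 1 - 1 = k := by omega
      have e2 : k + 1 - 2 = k - 1 := by omega
      rw [e1, e2, tailF_self, tailF_self]
      have hk2 : (2:ℝ) ≤ (k:ℝ) := by exact_mod_cast hk
      have h1 : ((k:ℝ) - 1) ≠ 0 := by linarith
      have h2 : (k:ℝ) ≠ 0 := by linarith
      have hx : x * x ^ (k-1) = x ^ k := by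
        conv_rhs => rw [show k = (k-1)+1 by omega]
        ring
      push_cast [show ((k:ℕ) + 1 : ℕ) = k + 1 from rfl]
      have e3 : ((k:ℝ) + 1 - 1) = (k:ℝ) := by ring
      have e4 : ((k:ℝ) + 1 - 2) = (k:ℝ) - 1 := by ring
      rw [e3, e4]
      rw [← hx]
      field_simp
      ring
  | succ b hb ih =>
      rw [Finset.sum_Icc_succ_top (by omega), ih]
      have hb3 : 3 ≤ b := by omega
      have e1 : b + 1 - 1 = b := by omega
      have e2 : b + 1 - 2 = b - 1 := by omega
      rw [e1, e2]
      -- recurrences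
      have r1 : tailF x (k - 1) (b - 1)
          = tailF x (k - 1) (b - 2) + ((b-2).choose (k-2) : ℝ) * x ^ (k-1) * (1 - x) ^ (b - k) := by
        have := tailF_succ x (k-1) (b-2) (by omega) (by omega)
        rw [show (b-2)+1 = b-1 by omega] at this
        rw [show (b-1)-(k-1) = b - k by omega] at this
        rw [show (k-1)-1 = k-2 by omega] at this
        exact this
      have r2 : tailF x k b
          = tailF x k (b - 1) + ((b-1).choose (k-1) : ℝ) * x ^ k * (1 - x) ^ (b - k) := by
        have := tailF_succ x k (b-1) (by omega) (by omega)
        rw [show (b-1)+1 = b by omega] at this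
        exact this
      have hchoose : ((k:ℝ) - 1) * ((b-1).choose (k-1) : ℝ)
          = ((b:ℝ) - 1) * ((b-2).choose (k-2) : ℝ) := by
        have h := Nat.add_one_mul_choose_eq (b-2) (k-2)
        rw [show (b-2)+1 = b-1 by omega, show (k-2)+1 = k-1 by omega] at h
        have h' : ((b-1 : ℕ) : ℝ) * ((b-2).choose (k-2) : ℝ)
            = ((b-1).choose (k-1) : ℝ) * ((k-1 : ℕ) : ℝ) := by exact_mod_cast congrArg (Nat.cast (R := ℝ)) h
        have c1 : ((b-1 : ℕ) : ℝ) = (b:ℝ) - 1 := by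
          have : (1:ℕ) ≤ b := by omega
          push_cast [Nat.cast_sub this]; ring
        have c2 : ((k-1 : ℕ) : ℝ) = (k:ℝ) - 1 := by
          have : (1:ℕ) ≤ k := by omega
          push_cast [Nat.cast_sub this]; ring
        rw [c1, c2] at h'
        linarith [h']
      have hcg : ((b-2).choose (k-2) : ℝ)
          = ((k:ℝ) - 1) * ((b-1).choose (k-1) : ℝ) / ((b:ℝ) - 1) := by
        have hb2 : (3:ℝ) ≤ (b:ℝ) := by
          exact_mod_cast hb3
        have h1 : ((b:ℝ) - 1) ≠ 0 := by linarith
        field_simp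
        linarith [hchoose]
      rw [r1, r2, hcg]
      have hb2 : (3:ℝ) ≤ (b:ℝ) := by exact_mod_cast hb3
      have h1 : ((b:ℝ) - 1) ≠ 0 := by linarith
      have h2 : (b:ℝ) ≠ 0 := by linarith
      have h3 : ((b:ℝ) + 1 - 1) ≠ 0 := by linarith
      have h4 : ((b:ℝ) + 1 - 2) ≠ 0 := by linarith
      have hx : x * x ^ (k-1) = x ^ k := by
        conv_rhs => rw [show k = (k-1)+1 by omega]
        ring
      rw [← hx]
      push_cast
      field_simp
      ring

set_option maxHeartbeats 4000000 in
/-- Lemma 3 (Capacity Achieving Degree Distributions for Rescaled Density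
Evolution), scalar form: for `k ≥ 2` and `r < 1 - 1/k` there exist `b ≥ k+1`,
`A > 0`, `γ > 1` such that the truncated degree distribution
`ρ_i = ρ*_{k,i} = (k-1)/((i-1)(i-2))` for `k+1 ≤ i ≤ b`,
`ρ_k = 1 - Σ_{i=k+1}^b ρ*_{k,i}` is a probability distribution with design rate
`1 - 2 Σ_i ρ_i/i ≥ r`, and the density-evolution recursion `α_0 = 1`,
`α_{t+1} = Σ_{i=k+1}^b ρ_i f_{k,i}(α_t)` satisfies `α_t ≤ exp(-A γ^t)`. -/
theorem stmt_12 (k : ℕ) (hk : 2 ≤ k) (r : ℝ) (hr : r < 1 - 1 / (k : ℝ)) :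
    ∃ (b : ℕ) (A γ : ℝ), k + 1 ≤ b ∧ 0 < A ∧ 1 < γ ∧
      ∀ ρ : ℕ → ℝ,
        (∀ i, k + 1 ≤ i → i ≤ b → ρ i = ((k : ℝ) - 1) / (((i : ℝ) - 1) * ((i : ℝ) - 2))) →
        ρ k = 1 - ∑ i ∈ Finset.Icc (k + 1) b,
            ((k : ℝ) - 1) / (((i : ℝ) - 1) * ((i : ℝ) - 2)) →
        (0 ≤ ρ k ∧
         1 - 2 * ∑ i ∈ Finset.Icc k b, ρ i / (i : ℝ) ≥ r ∧
         ∀ α : ℕ → ℝ, α 0 = 1 →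
           (∀ t, α (t + 1) = ∑ i ∈ Finset.Icc (k + 1) b, ρ i *
               ∑ j ∈ Finset.Icc k (i - 1),
                 ((i - 1).choose j : ℝ) * (α t) ^ j * (1 - α t) ^ (i - 1 - j)) →
           ∀ t : ℕ, 1 ≤ t → α t ≤ Real.exp (-A * γ ^ t)) := by
  have hk2 : (2:ℝ) ≤ (k:ℝ) := by exact_mod_cast hk
  have hkpos : (0:ℝ) < (k:ℝ) := by linarith
  set ε : ℝ := 1 - 1/(k:ℝ) - r with hεdef
  have hε : 0 < ε := by simp only [hεdef]; linarith
  obtain ⟨N, hN⟩ := exists_nat_gt (2/ε + 1)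
  set b : ℕ := max N (k+1) with hbdef
  have hbk : k + 1 ≤ b := le_max_right _ _
  have hb3 : 3 ≤ b := by omega
  have hB3 : (3:ℝ) ≤ (b:ℝ) := by exact_mod_cast hb3
  have hBN : (N:ℝ) ≤ (b:ℝ) := by exact_mod_cast (le_max_left N (k+1))
  have hBe : 2/ε ≤ (b:ℝ) - 1 := by linarith
  have hB1 : (0:ℝ) < (b:ℝ) - 1 := by linarith
  -- constants
  set δ : ℝ := 1/((b:ℝ) - 1) with hδdef
  have hδpos : 0 < δ := by positivity
  have hδle : δ ≤ 1/2 := by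
    rw [hδdef, div_le_div_iff₀ hB1 (by norm_num)]
    linarith
  set c : ℝ := 1 - δ^(b-2) with hcdef
  have hδ1 : δ ≤ 1 := by linarith
  have hc0 : 0 ≤ c := by
    have : δ^(b-2) ≤ 1 := pow_le_one₀ (le_of_lt hδpos) hδ1
    simp only [hcdef]; linarith
  have hc1 : c < 1 := by
    have : 0 < δ^(b-2) := by positivity
    simp only [hcdef]; linarith
  set K : ℝ := (b:ℝ) * 2^b with hKdef
  have hK1 : 1 ≤ K := by
    have h2b : (1:ℝ) ≤ 2^b := one_le_pow₀ (by norm_num)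
    calc (1:ℝ) = 1 * 1 := by ring
    _ ≤ (b:ℝ) * 2^b := by
        apply mul_le_mul (by linarith) h2b (by norm_num) (by linarith)
  have hKpos : 0 < K := by linarith
  obtain ⟨T, hT⟩ := exists_pow_lt_of_lt_one (div_pos (Real.exp_pos (-1)) hKpos) hc1
  have hTK : K * c^T < Real.exp (-1) := by
    rw [← lt_div_iff₀' hKpos]
    exact hT
  refine ⟨b, δ / 2^(T+1), 2, hbk, by positivity, one_lt_two, ?_⟩
  intro ρ hρ hρk
  have hsum := telescope1 k hk b (by omega)
  have hρkval : ρ k = ((k:ℝ) - 1)/((b:ℝ) - 1) := by rw [hρk, hsum]; ring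
  have hρk0 : 0 ≤ ρ k := by rw [hρkval]; exact div_nonneg (by linarith) (by linarith)
  refine ⟨hρk0, ?_, ?_⟩
  · -- design rate
    have hsplit : ∑ i ∈ Finset.Icc k b, ρ i / (i:ℝ)
        = ρ k / (k:ℝ) + ∑ i ∈ Finset.Icc (k+1) b, ρ i / (i:ℝ) := by
      rw [show Finset.Icc k b = insert k (Finset.Icc (k+1) b) by
        ext j; simp only [Finset.mem_insert, Finset.mem_Icc]; omega]
      rw [Finset.sum_insert (by simp only [Finset.mem_Icc]; omega)]
    have hcongr : ∑ i ∈ Finset.Icc (k+1) b, ρ i / (i:ℝ)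
        = ∑ i ∈ Finset.Icc (k+1) b,
            ((k : ℝ) - 1) / (((i : ℝ) - 1) * ((i : ℝ) - 2)) / (i:ℝ) := by
      refine Finset.sum_congr rfl fun i hi => ?_
      simp only [Finset.mem_Icc] at hi
      rw [hρ i hi.1 hi.2]
    have ht2 := telescope2 k hk b (by omega)
    rw [hsplit, hcongr, ht2, hρkval]
    have t1 : ((k:ℝ)-1)/((b:ℝ)-1) / (k:ℝ) ≤ 1/((b:ℝ)-1) := by
      rw [div_div, div_le_div_iff₀ (by positivity) hB1]
      nlinarith
    have t2 : 2*(1/((b:ℝ)-1)) ≤ ε := by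
      rw [mul_one_div, div_le_iff₀ hB1]
      have := (div_le_iff₀ hε).mp hBe
      linarith
    have t3 : (0:ℝ) ≤ ((k:ℝ)-1)/(2*(b:ℝ)*((b:ℝ)-1)) := div_nonneg (by linarith) (by nlinarith)
    have t5 : 2*(1/(2*(k:ℝ))) = 1/(k:ℝ) := by field_simp
    have hεr : r = 1 - 1/(k:ℝ) - ε := by rw [hεdef]; ring
    rw [hεr, ge_iff_le]
    linarith
  · -- density evolution
    intro α hα0 hαrec
    have hrec' : ∀ t, α (t+1) = ∑ i ∈ Finset.Icc (k+1) b,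
        ((k : ℝ) - 1) / (((i : ℝ) - 1) * ((i : ℝ) - 2)) * tailF (α t) k (i-1) := by
      intro t
      rw [hαrec t]
      refine Finset.sum_congr rfl fun i hi => ?_
      simp only [Finset.mem_Icc] at hi
      rw [hρ i hi.1 hi.2]
      rfl
    have hstep : ∀ t, α (t+1) = α t * tailF (α t) (k-1) (b-2)
        - ((k:ℝ) - 1)/((b:ℝ) - 1) * tailF (α t) k (b-1) := by
      intro t
      rw [hrec' t, main_identity k hk (α t) b hbk]
    -- bounds
    have h01 : ∀ t, 0 ≤ α t ∧ α t ≤ 1 := by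
      intro t
      induction t with
      | zero => rw [hα0]; norm_num
      | succ t ih =>
        obtain ⟨ih0, ih1⟩ := ih
        constructor
        · rw [hrec' t]
          refine Finset.sum_nonneg fun i hi => ?_
          simp only [Finset.mem_Icc] at hi
          have hi2 : (2:ℝ) ≤ (i:ℝ) - 1 := by
            have : (3:ℕ) ≤ i := by omega
            have : (3:ℝ) ≤ (i:ℝ) := by exact_mod_cast this
            linarith
          have := tailF_nonneg ih0 ih1 k (i-1)
          have hρpos : 0 ≤ ((k : ℝ) - 1) / (((i : ℝ) - 1) * ((i : ℝ) - 2)) := by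
            apply div_nonneg (by linarith)
            nlinarith
          exact mul_nonneg hρpos this
        · rw [hstep t]
          have hG := tailF_le_one ih0 ih1 (show 1 ≤ k - 1 by omega) (b-2)
          have hF := tailF_nonneg ih0 ih1 k (b-1)
          have hκ : 0 ≤ ((k:ℝ)-1)/((b:ℝ)-1) := div_nonneg (by linarith) (by linarith)
          nlinarith
    have hcontr : ∀ t, α t ≤ 1 - δ → α (t+1) ≤ c * α t := by
      intro t hle
      obtain ⟨h0, h1⟩ := h01 t
      rw [hstep t]
      have hG : tailF (α t) (k-1) (b-2) ≤ 1 - (1 - α t)^(b-2) :=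
        tailF_le_one_sub h0 h1 (by omega) (b-2)
      have hδα : δ ≤ 1 - α t := by linarith
      have hpow : δ^(b-2) ≤ (1 - α t)^(b-2) :=
        pow_le_pow_left₀ (le_of_lt hδpos) hδα (b-2)
      have hF := tailF_nonneg h0 h1 k (b-1)
      have hκ : 0 ≤ ((k:ℝ)-1)/((b:ℝ)-1) := div_nonneg (by linarith) (by linarith)
      have : tailF (α t) (k-1) (b-2) ≤ c := by
        simp only [hcdef]; linarith
      nlinarith
    have hα1 : α 1 = 1 - ((k:ℝ)-1)/((b:ℝ)-1) := by
      have := hstep 0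
      rw [hα0] at this
      rw [this, tailF_one (show k - 1 ≤ b - 2 by omega), tailF_one (show k ≤ b - 1 by omega)]
      ring
    have hα1le : α 1 ≤ 1 - δ := by
      rw [hα1, hδdef]
      have : 1/((b:ℝ)-1) ≤ ((k:ℝ)-1)/((b:ℝ)-1) :=
        (div_le_div_iff_of_pos_right hB1).mpr (by linarith)
      linarith
    have hup : ∀ t, 1 ≤ t → α t ≤ 1 - δ := by
      intro t ht
      induction t with
      | zero => omega
      | succ t ih =>
        rcases Nat.eq_or_lt_of_le ht with h | h
        · rw [← h]; exact hα1le
        · have ht' : 1 ≤ t := by omega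
          have := hcontr t (ih ht')
          have h0 := (h01 t).1
          nlinarith [ih ht']
    have hgeo : ∀ s : ℕ, α (1+s) ≤ c^s := by
      intro s
      induction s with
      | zero =>
        calc α (1+0) = α 1 := by norm_num
          _ ≤ 1 - δ := hα1le
          _ ≤ 1 := by linarith
          _ = c^0 := by rw [pow_zero]
      | succ s ih =>
        have h1s : 1 ≤ 1 + s := by omega
        have := hcontr (1+s) (hup (1+s) h1s)
        calc α (1+(s+1)) = α ((1+s)+1) := by ring_nf
        _ ≤ c * α (1+s) := this
        _ ≤ c * c^s := by
            apply mul_le_mul_of_nonneg_left ih hc0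
        _ = c^(s+1) := by ring
    have hquad : ∀ t, α (t+1) ≤ K * α t ^ 2 := by
      intro t
      obtain ⟨h0, h1⟩ := h01 t
      rw [hrec' t]
      have hterm : ∀ i ∈ Finset.Icc (k+1) b,
          ((k : ℝ) - 1) / (((i : ℝ) - 1) * ((i : ℝ) - 2)) * tailF (α t) k (i-1)
            ≤ 2^b * α t ^ 2 := by
        intro i hi
        simp only [Finset.mem_Icc] at hi
        have hi3 : (3:ℝ) ≤ (i:ℝ) := by
          have : (3:ℕ) ≤ i := by omega
          exact_mod_cast this
        have hρle : ((k : ℝ) - 1) / (((i : ℝ) - 1) * ((i : ℝ) - 2)) ≤ 1 := by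
          rw [div_le_one (by nlinarith)]
          have hik : (k:ℝ) + 1 ≤ (i:ℝ) := by exact_mod_cast hi.1
          nlinarith
        have hρ0 : 0 ≤ ((k : ℝ) - 1) / (((i : ℝ) - 1) * ((i : ℝ) - 2)) := by
          apply div_nonneg (by linarith)
          nlinarith
        have htf := tailF_le_pow h0 h1 k (i-1)
        have htf0 := tailF_nonneg h0 h1 k (i-1)
        have hαk : α t ^ k ≤ α t ^ 2 := pow_le_pow_of_le_one h0 h1 hk
        have h2i : (2:ℝ)^(i-1) ≤ 2^b := by
          apply pow_le_pow_right₀ (by norm_num)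
          omega
        calc ((k : ℝ) - 1) / (((i : ℝ) - 1) * ((i : ℝ) - 2)) * tailF (α t) k (i-1)
            ≤ 1 * tailF (α t) k (i-1) := by
              apply mul_le_mul_of_nonneg_right hρle htf0
          _ = tailF (α t) k (i-1) := by ring
          _ ≤ 2^(i-1) * α t ^ k := htf
          _ ≤ 2^b * α t ^ 2 := by
              have hαk0 : 0 ≤ α t ^ k := by positivity
              have := mul_le_mul h2i hαk hαk0 (by positivity : (0:ℝ) ≤ (2:ℝ)^b)
              linarith
      calc ∑ i ∈ Finset.Icc (k+1) b,
            ((k : ℝ) - 1) / (((i : ℝ) - 1) * ((i : ℝ) - 2)) * tailF (α t) k (i-1)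
          ≤ ∑ _i ∈ Finset.Icc (k+1) b, (2:ℝ)^b * α t ^ 2 := Finset.sum_le_sum hterm
        _ = (Finset.Icc (k+1) b).card * ((2:ℝ)^b * α t ^ 2) := by
            rw [Finset.sum_const, nsmul_eq_mul]
        _ ≤ (b:ℝ) * ((2:ℝ)^b * α t ^ 2) := by
            have hcard : (Finset.Icc (k+1) b).card ≤ b := by
              rw [Nat.card_Icc]; omega
            have : ((Finset.Icc (k+1) b).card : ℝ) ≤ (b:ℝ) := by exact_mod_cast hcard
            apply mul_le_mul_of_nonneg_right this (by positivity)
        _ = K * α t ^ 2 := by rw [hKdef]; ring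
    have hbeta : ∀ s : ℕ, K * α (T+1+s) ≤ Real.exp (-(2:ℝ)^s) := by
      intro s
      induction s with
      | zero =>
        have := hgeo T
        have h1T : α (T+1+0) = α (1+T) := by ring_nf
        rw [h1T]
        calc K * α (1+T) ≤ K * c^T := by
              apply mul_le_mul_of_nonneg_left (hgeo T) (by linarith)
          _ ≤ Real.exp (-1) := le_of_lt hTK
          _ = Real.exp (-(2:ℝ)^0) := by norm_num
      | succ s ih =>
        have h0 := (h01 (T+1+s)).1
        have hK0 : 0 ≤ K * α (T+1+s) := by positivity
        calc K * α (T+1+(s+1)) = K * α ((T+1+s)+1) := by ring_nf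
          _ ≤ K * (K * α (T+1+s)^2) := by
              apply mul_le_mul_of_nonneg_left (hquad (T+1+s)) (by linarith)
          _ = (K * α (T+1+s))^2 := by ring
          _ ≤ (Real.exp (-(2:ℝ)^s))^2 := by
              apply pow_le_pow_left₀ hK0 ih
          _ = Real.exp (-(2:ℝ)^(s+1)) := by
              rw [← Real.exp_nat_mul]
              congr 1
              ring
    -- conclude
    intro t ht
    rcases le_or_gt t T with hcase | hcase
    · -- small t
      have hαt : α t ≤ 1 - δ := hup t ht
      have hexp : 1 - δ ≤ Real.exp (-δ) := by
        have := Real.add_one_le_exp (-δ)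
        linarith
      have hA2 : δ / 2^(T+1) * 2^t ≤ δ := by
        rw [div_mul_eq_mul_div, div_le_iff₀ (by positivity)]
        have h2t : (2:ℝ)^t ≤ 2^(T+1) := by
          apply pow_le_pow_right₀ (by norm_num)
          omega
        nlinarith
      calc α t ≤ 1 - δ := hαt
        _ ≤ Real.exp (-δ) := hexp
        _ ≤ Real.exp (-(δ / 2^(T+1)) * 2^t) := by
            apply Real.exp_le_exp.mpr
            nlinarith
    · -- large t
      set s := t - (T+1) with hsdef
      have hts : t = T + 1 + s := by omega
      have hβ := hbeta s
      have hαβ : α t ≤ K * α t := by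
        have h0 := (h01 t).1
        nlinarith
      have h2split : (2:ℝ)^t = 2^(T+1) * 2^s := by
        rw [hts, pow_add]
      have hA2 : δ / 2^(T+1) * 2^t ≤ 2^s := by
        rw [h2split]
        have h2T : (0:ℝ) < 2^(T+1) := by positivity
        have : δ / 2^(T+1) * (2^(T+1) * 2^s) = δ * 2^s := by
          field_simp
        rw [this]
        nlinarith [pow_pos (show (0:ℝ) < 2 by norm_num) s]
      calc α t ≤ K * α t := hαβ
        _ = K * α (T+1+s) := by rw [← hts]
        _ ≤ Real.exp (-(2:ℝ)^s) := hβ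
        _ ≤ Real.exp (-(δ / 2^(T+1)) * 2^t) := by
            apply Real.exp_le_exp.mpr
            nlinarith
end

section
/- Let q ≥ 2 be a prime power and let s, ℓ, m be integers with 0 ≤ s ≤ min(ℓ, m). Let A(s, ℓ, m) denote the number of ℓ × m matrices with entries in 𝔽_q whose rank equals s. Then A(s, ℓ, m) ≥ q^{ℓm − (ℓ−s)(m−s)} · (1 − s·q^{s−m}). -/
open Finset Matrix

section Aux

variable {F : Type} [Field F] {s l m : ℕ}

/-- The `l × s` matrix with identity on the top `s` rows and `X` below. -/
private def Bmat (hsl : s ≤ l) (X : Matrix (Fin (l - s)) (Fin s) F) : Matrix (Fin l) (Fin s) F :=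
  Matrix.of fun i k => if h : (i : ℕ) < s then (if (⟨i, h⟩ : Fin s) = k then 1 else 0)
    else X ⟨(i : ℕ) - s, by omega⟩ k

private lemma Bmat_mul_apply_lt (hsl : s ≤ l) (X : Matrix (Fin (l - s)) (Fin s) F)
    (C : Matrix (Fin s) (Fin m) F) (i : Fin l) (h : (i : ℕ) < s) (j : Fin m) :
    (Bmat hsl X * C) i j = C ⟨i, h⟩ j := by
  simp [Matrix.mul_apply, Bmat, h, ite_mul, Finset.sum_ite_eq]

private lemma Bmat_mul_apply_ge (hsl : s ≤ l) (X : Matrix (Fin (l - s)) (Fin s) F)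
    (C : Matrix (Fin s) (Fin m) F) (i : Fin l) (h : ¬ (i : ℕ) < s) (j : Fin m) :
    (Bmat hsl X * C) i j = ∑ k, X ⟨(i : ℕ) - s, by omega⟩ k * C k j := by
  simp [Matrix.mul_apply, Bmat, h]

/-- The `s × l` projection onto the first `s` coordinates. -/
private def Pmat (hsl : s ≤ l) : Matrix (Fin s) (Fin l) F :=
  Matrix.of fun i k => if Fin.castLE hsl i = k then 1 else 0

private lemma Pmat_mul_apply (hsl : s ≤ l) (M : Matrix (Fin l) (Fin m) F) (i : Fin s)
    (j : Fin m) : (Pmat (F := F) hsl * M) i j = M (Fin.castLE hsl i) j := by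
  simp [Matrix.mul_apply, Pmat, ite_mul, Finset.sum_ite_eq]

private lemma rank_BC (hsl : s ≤ l) (X : Matrix (Fin (l - s)) (Fin s) F)
    (C : Fin s → Fin m → F) (hC : LinearIndependent F C) :
    (Bmat hsl X * Matrix.of C).rank = s := by
  have hC' : (Matrix.of C : Matrix (Fin s) (Fin m) F).rank = s := by
    have := LinearIndependent.rank_matrix (M := (Matrix.of C : Matrix (Fin s) (Fin m) F)) hC
    simpa using this
  refine le_antisymm ?_ ?_
  · simpa [hC'] using Matrix.rank_mul_le_right (Bmat hsl X) (Matrix.of C)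
  · have key : Pmat (F := F) hsl * (Bmat hsl X * Matrix.of C) = Matrix.of C := by
      ext i j
      rw [Pmat_mul_apply, Bmat_mul_apply_lt hsl X _ _ (by simpa using i.2)]
      simp
    calc s = (Matrix.of C : Matrix (Fin s) (Fin m) F).rank := hC'.symm
      _ = (Pmat (F := F) hsl * (Bmat hsl X * Matrix.of C)).rank := by rw [key]
      _ ≤ (Bmat hsl X * Matrix.of C).rank := Matrix.rank_mul_le_right _ _

private lemma BC_injective (hsl : s ≤ l) :
    Function.Injective (fun p : Matrix (Fin (l - s)) (Fin s) F ×
        {C : Fin s → Fin m → F // LinearIndependent F C} =>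
      Bmat hsl p.1 * Matrix.of p.2.1) := by
  rintro ⟨X₁, C₁, hC₁⟩ ⟨X₂, C₂, hC₂⟩ hEq
  simp only at hEq
  have hCeq : C₁ = C₂ := by
    funext i j
    have h2 : ((Fin.castLE hsl i : Fin l) : ℕ) < s := by simpa using i.2
    have := congrFun (congrFun hEq (Fin.castLE hsl i)) j
    rw [Bmat_mul_apply_lt hsl X₁ _ _ h2, Bmat_mul_apply_lt hsl X₂ _ _ h2] at this
    simpa using this
  subst hCeq
  have hXeq : X₁ = X₂ := by
    funext r k
    have hrl : s + (r : ℕ) < l := by omega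
    have hnot : ¬ ((⟨s + (r : ℕ), hrl⟩ : Fin l) : ℕ) < s := by simp
    have hrow : ∀ j, ∑ k, X₁ r k * C₁ k j = ∑ k, X₂ r k * C₁ k j := by
      intro j
      have := congrFun (congrFun hEq ⟨s + (r : ℕ), hrl⟩) j
      rw [Bmat_mul_apply_ge hsl X₁ _ _ hnot, Bmat_mul_apply_ge hsl X₂ _ _ hnot] at this
      have hr : (⟨((⟨s + (r : ℕ), hrl⟩ : Fin l) : ℕ) - s, by omega⟩ : Fin (l - s)) = r := by
        ext; simp
      rw [hr] at this
      simpa using this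
    have hzero : ∑ k, (fun k => X₁ r k - X₂ r k) k • C₁ k = 0 := by
      funext j
      simp only [Finset.sum_apply, Pi.smul_apply, smul_eq_mul, sub_mul, Pi.zero_apply,
        Finset.sum_sub_distrib]
      rw [hrow j]
      simp
    have := Fintype.linearIndependent_iff.mp hC₁ (fun k => X₁ r k - X₂ r k) hzero k
    exact sub_eq_zero.mp this
  rw [hXeq]

private lemma keybound (q m : ℕ) (hq2 : 2 ≤ q) :
    ∀ s : ℕ, s ≤ m →
      (q : ℝ) ^ (s * m) * (1 - (s : ℝ) * (q : ℝ) ^ ((s : ℤ) - m)) ≤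
        ∏ i ∈ Finset.range s, ((q : ℝ) ^ m - (q : ℝ) ^ i) := by
  have hq0 : (0 : ℝ) < q := by positivity
  have hq1 : (1 : ℝ) ≤ q := by exact_mod_cast Nat.one_le_of_lt hq2
  have hq2' : (2 : ℝ) ≤ q := by exact_mod_cast hq2
  intro s
  induction s with
  | zero => intro _; simp
  | succ k ih =>
    intro hsm
    have hk : k ≤ m := by omega
    have ihk := ih hk
    obtain ⟨x, hx0, hx1, hqk, hqk1, hqk2⟩ :
        ∃ x : ℝ, 0 < x ∧ x ≤ 1 ∧ (q : ℝ) ^ k = (q : ℝ) ^ m * x ∧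
          (q : ℝ) ^ ((k : ℤ) + 1 - (m : ℤ)) = q * x ∧ (q : ℝ) ^ ((k : ℤ) - (m : ℤ)) = x := by
      refine ⟨(q : ℝ) ^ ((k : ℤ) - (m : ℤ)), zpow_pos hq0 _,
        zpow_le_one_of_nonpos₀ hq1 (by omega), ?_, ?_, rfl⟩
      · rw [← zpow_natCast (q : ℝ) m, ← zpow_add₀ (ne_of_gt hq0), ← zpow_natCast (q : ℝ) k]
        congr 1; omega
      · rw [show (k : ℤ) + 1 - (m : ℤ) = ((k : ℤ) - (m : ℤ)) + 1 from by ring,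
          zpow_add_one₀ (ne_of_gt hq0)]
        ring
    rw [Finset.prod_range_succ]
    rw [hqk2] at ihk
    have hP : (0 : ℝ) ≤ ∏ i ∈ Finset.range k, ((q : ℝ) ^ m - (q : ℝ) ^ i) := by
      apply Finset.prod_nonneg
      intro i hi
      have hi' : i ≤ m := by have := Finset.mem_range.mp hi; omega
      have := pow_le_pow_right₀ hq1 hi'
      linarith
    have hfac : (0 : ℝ) ≤ (q : ℝ) ^ m - (q : ℝ) ^ k := by
      have := pow_le_pow_right₀ hq1 hk
      linarith
    have h1 : (q : ℝ) ^ (k * m) * (1 - (k : ℝ) * x) * ((q : ℝ) ^ m - (q : ℝ) ^ k) ≤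
        (∏ i ∈ Finset.range k, ((q : ℝ) ^ m - (q : ℝ) ^ i)) * ((q : ℝ) ^ m - (q : ℝ) ^ k) :=
      mul_le_mul_of_nonneg_right ihk hfac
    have hA : (0 : ℝ) < (q : ℝ) ^ (k * m) := by positivity
    have hQm : (0 : ℝ) < (q : ℝ) ^ m := by positivity
    have hkey : (q : ℝ) ^ ((k + 1) * m) * (1 - ((k : ℝ) + 1) * ((q : ℝ) * x)) ≤
        (q : ℝ) ^ (k * m) * (1 - (k : ℝ) * x) * ((q : ℝ) ^ m - (q : ℝ) ^ k) := by
      have hpow : (q : ℝ) ^ ((k + 1) * m) = (q : ℝ) ^ (k * m) * (q : ℝ) ^ m := by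
        rw [← pow_add]; congr 1; ring
      rw [hpow, hqk]
      have hterm : (0 : ℝ) ≤ ((k : ℝ) + 1) * x * ((q : ℝ) - 1) + (k : ℝ) * x ^ 2 := by
        have h2 : (0 : ℝ) ≤ ((k : ℝ) + 1) * x * ((q : ℝ) - 1) := by
          apply mul_nonneg (by positivity); linarith
        have h3 : (0 : ℝ) ≤ (k : ℝ) * x ^ 2 := by positivity
        linarith
      have hnn : (0 : ℝ) ≤ (q : ℝ) ^ (k * m) * (q : ℝ) ^ m *
          (((k : ℝ) + 1) * x * ((q : ℝ) - 1) + (k : ℝ) * x ^ 2) :=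
        mul_nonneg (by positivity) hterm
      nlinarith [hnn]
    have hcast : ((k + 1 : ℕ) : ℝ) = (k : ℝ) + 1 := by push_cast; ring
    have hcast2 : (((k + 1 : ℕ) : ℤ) - (m : ℤ)) = ((k : ℤ) + 1 - (m : ℤ)) := by push_cast; ring
    rw [hcast, hcast2, hqk1]
    linarith [h1, hkey]

end Aux

/-- Lower bound on the number `A(s,ℓ,m)` of `ℓ × m` matrices over `𝔽_q` of rank `s`:
`A(s,ℓ,m) ≥ q^(ℓm - (ℓ-s)(m-s)) (1 - s q^(s-m))`. -/
theorem stmt_13 (q s l m : ℕ) (hq2 : 2 ≤ q)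
    (F : Type) [Field F] [Fintype F] (hq : Fintype.card F = q)
    (hsl : s ≤ l) (hsm : s ≤ m) :
    (q : ℝ) ^ ((l : ℤ) * m - ((l : ℤ) - s) * ((m : ℤ) - s)) *
        (1 - (s : ℝ) * (q : ℝ) ^ ((s : ℤ) - m)) ≤
      (Nat.card {M : Matrix (Fin l) (Fin m) F // M.rank = s} : ℝ) := by
  classical
  -- the injection
  have hinj : Function.Injective
      (fun p : Matrix (Fin (l - s)) (Fin s) F ×
          {C : Fin s → Fin m → F // LinearIndependent F C} =>
        (⟨Bmat hsl p.1 * Matrix.of p.2.1, rank_BC hsl p.1 p.2.1 p.2.2⟩ :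
          {M : Matrix (Fin l) (Fin m) F // M.rank = s})) := by
    intro a b h
    exact BC_injective hsl (congrArg Subtype.val h)
  have hle : Nat.card (Matrix (Fin (l - s)) (Fin s) F ×
        {C : Fin s → Fin m → F // LinearIndependent F C}) ≤
      Nat.card {M : Matrix (Fin l) (Fin m) F // M.rank = s} :=
    Nat.card_le_card_of_injective _ hinj
  have hcardT : Nat.card (Matrix (Fin (l - s)) (Fin s) F ×
        {C : Fin s → Fin m → F // LinearIndependent F C}) =
      q ^ ((l - s) * s) * ∏ i ∈ Finset.range s, (q ^ m - q ^ i) := by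
    rw [Nat.card_prod]
    congr 1
    · rw [Nat.card_congr (Matrix.of (m := Fin (l - s)) (n := Fin s) (α := F)).symm,
        Nat.card_fun, Nat.card_fun, Nat.card_eq_fintype_card (α := F), hq,
        Nat.card_eq_fintype_card, Nat.card_eq_fintype_card, Fintype.card_fin, Fintype.card_fin,
        ← pow_mul, Nat.mul_comm]
    · have hfr : s ≤ Module.finrank F (Fin m → F) := by
        simpa using hsm
      rw [card_linearIndependent (K := F) (V := Fin m → F) hfr]
      have hn : Module.finrank F (Fin m → F) = m := by simp
      simp only [hq, hn]
      exact Fin.prod_univ_eq_prod_range (fun i => q ^ m - q ^ i) s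
  have hcast : ((q ^ ((l - s) * s) * ∏ i ∈ Finset.range s, (q ^ m - q ^ i) : ℕ) : ℝ) =
      (q : ℝ) ^ ((l - s) * s) * ∏ i ∈ Finset.range s, ((q : ℝ) ^ m - (q : ℝ) ^ i) := by
    rw [Nat.cast_mul, Nat.cast_pow, Nat.cast_prod]
    congr 1
    refine Finset.prod_congr rfl fun i hi => ?_
    have him : i ≤ m := by have := Finset.mem_range.mp hi; omega
    have hle' : q ^ i ≤ q ^ m := Nat.pow_le_pow_right (by omega) him
    rw [Nat.cast_sub hle', Nat.cast_pow, Nat.cast_pow]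
  have hexp : (q : ℝ) ^ ((l : ℤ) * m - ((l : ℤ) - s) * ((m : ℤ) - s)) =
      (q : ℝ) ^ ((l - s) * s) * (q : ℝ) ^ (s * m) := by
    have hid : ((l : ℤ) * m - ((l : ℤ) - s) * ((m : ℤ) - s)) =
        (((l - s) * s + s * m : ℕ) : ℤ) := by
      push_cast [Nat.cast_sub hsl]
      ring
    rw [hid, zpow_natCast, pow_add]
  calc (q : ℝ) ^ ((l : ℤ) * m - ((l : ℤ) - s) * ((m : ℤ) - s)) *
          (1 - (s : ℝ) * (q : ℝ) ^ ((s : ℤ) - m))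
      = (q : ℝ) ^ ((l - s) * s) *
          ((q : ℝ) ^ (s * m) * (1 - (s : ℝ) * (q : ℝ) ^ ((s : ℤ) - m))) := by
        rw [hexp]; ring
    _ ≤ (q : ℝ) ^ ((l - s) * s) * ∏ i ∈ Finset.range s, ((q : ℝ) ^ m - (q : ℝ) ^ i) :=
        mul_le_mul_of_nonneg_left (keybound q m hq2 s hsm) (by positivity)
    _ = ((q ^ ((l - s) * s) * ∏ i ∈ Finset.range s, (q ^ m - q ^ i) : ℕ) : ℝ) := hcast.symm
    _ ≤ (Nat.card {M : Matrix (Fin l) (Fin m) F // M.rank = s} : ℝ) := by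
        rw [← hcardT]
        exact_mod_cast hle
end

section
/- Let q ≥ 2 be a prime power and let s, ℓ, m be integers with 0 ≤ s ≤ min(ℓ, m). Let A(s, ℓ, m) denote the number of ℓ × m matrices with entries in 𝔽_q whose rank equals s. Then A(s, ℓ, m) ≤ binom(ℓ, s) · q^{ℓm − (ℓ−s)(m−s)}; in particular A(s, ℓ, m) ≤ 2^ℓ · q^{ℓm − (ℓ−s)(m−s)}. -/
open Finset Submodule in
/-- Key structural lemma: a matrix of rank `s` has a set `T` of `s` rows such that
every row lies in the span of the rows indexed by `T`. -/
lemma aux_exists_spanning_rows {l m : ℕ} {F : Type} [Field F] {s : ℕ}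
    (M : Matrix (Fin l) (Fin m) F) (hM : M.rank = s) :
    ∃ T : Finset (Fin l), T.card = s ∧
      ∀ i, M i ∈ Submodule.span F (M '' (T : Set (Fin l))) := by
  classical
  obtain ⟨b, hb_sub, hb_span, hb_li⟩ := exists_linearIndependent F (Set.range M)
  have hbfin : b.Finite := (Set.finite_range M).subset hb_sub
  haveI : Fintype b := hbfin.fintype
  have hcard : b.toFinset.card = s := by
    have h1 : Module.finrank F (Submodule.span F b) = b.toFinset.card :=
      finrank_span_set_eq_card hb_li
    rw [hb_span] at h1
    rw [← h1, ← hM, M.rank_eq_finrank_span_row]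
    rfl
  -- choose an index for each vector in b
  have hsel : ∀ x : b, ∃ i : Fin l, M i = (x : Fin m → F) := fun x => hb_sub x.2
  choose g hg using hsel
  have hginj : Function.Injective g := by
    intro x y hxy
    apply Subtype.ext
    rw [← hg x, ← hg y, hxy]
  refine ⟨Finset.image g Finset.univ, ?_, ?_⟩
  · rw [Finset.card_image_of_injective _ hginj, Finset.card_univ, ← hcard,
      Set.toFinset_card]
  · intro i
    have hmem : M i ∈ Submodule.span F b := by
      rw [hb_span]
      exact Submodule.subset_span (Set.mem_range_self i)
    refine Submodule.span_le.mpr ?_ hmem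
    intro x hx
    apply Submodule.subset_span
    refine ⟨g ⟨x, hx⟩, ?_, hg ⟨x, hx⟩⟩
    simp

open Finset in
/-- Counting bound for matrices whose rows are spanned by the rows in a fixed set `T`. -/
lemma aux_card_span_le {l m : ℕ} {F : Type} [Field F] [Fintype F] [DecidableEq F]
    {s q : ℕ} (hq : Fintype.card F = q) (T : Finset (Fin l)) (hT : T.card = s)
    (hsl : s ≤ l) :
    Nat.card {M : Matrix (Fin l) (Fin m) F //
        ∀ i, M i ∈ Submodule.span F (M '' (T : Set (Fin l)))} ≤
      q ^ (s * m + (l - s) * s) := by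
  classical
  rw [Nat.card_eq_fintype_card]
  -- encode each such matrix by its rows on T and coefficients off T
  have hcoef : ∀ (M : {M : Matrix (Fin l) (Fin m) F //
      ∀ i, M i ∈ Submodule.span F (M '' (T : Set (Fin l)))}) (i : Fin l),
      ∃ c : {x // x ∈ T} → F, ∑ t, c t • M.1 t.1 = M.1 i := by
    intro M i
    have h := M.2 i
    rw [Set.image_eq_range (f := M.1)] at h
    exact (Submodule.mem_span_range_iff_exists_fun F).mp h
  choose c hc using hcoef
  set f : {M : Matrix (Fin l) (Fin m) F //
      ∀ i, M i ∈ Submodule.span F (M '' (T : Set (Fin l)))} →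
      ({x // x ∈ T} → Fin m → F) × ({i // i ∉ T} → {x // x ∈ T} → F) :=
    fun M => (fun t => M.1 t.1, fun i => c M i.1) with hf
  have hinj : Function.Injective f := by
    intro M1 M2 h
    rw [hf, Prod.mk.injEq] at h
    obtain ⟨h1, h2⟩ := h
    apply Subtype.ext
    ext i j
    by_cases hi : i ∈ T
    · exact congrFun (congrFun h1 ⟨i, hi⟩) j
    · have e1 : M1.1 i = ∑ t, c M1 i t • M1.1 t.1 := (hc M1 i).symm
      have e2 : M2.1 i = ∑ t, c M2 i t • M2.1 t.1 := (hc M2 i).symm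
      have hcc : c M1 i = c M2 i := congrFun h2 ⟨i, hi⟩
      have hrow : M1.1 i = M2.1 i := by
        rw [e1, e2, hcc]
        exact Finset.sum_congr rfl fun t _ => by rw [congrFun h1 t]
      exact congrFun hrow j

  calc Fintype.card {M : Matrix (Fin l) (Fin m) F //
        ∀ i, M i ∈ Submodule.span F (M '' (T : Set (Fin l)))}
      ≤ Fintype.card (({x // x ∈ T} → Fin m → F) × ({i // i ∉ T} → {x // x ∈ T} → F)) :=
        Fintype.card_le_of_injective f hinj
    _ = q ^ (s * m + (l - s) * s) := by
        have hcT : Fintype.card {x // x ∈ T} = s := by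
          rw [Fintype.card_coe, hT]
        have hcTc : Fintype.card {i // i ∉ T} = l - s := by
          rw [Fintype.card_subtype_compl, Fintype.card_fin, Fintype.card_coe, hT]
        rw [Fintype.card_prod, Fintype.card_fun, Fintype.card_fun, Fintype.card_fun,
          Fintype.card_fun, hcT, hcTc, Fintype.card_fin, hq, ← pow_mul, ← pow_mul,
          ← pow_add]
        congr 1
        ring

/-- Upper bound on the number `A(s,ℓ,m)` of `ℓ × m` matrices over `𝔽_q` of rank `s`:
`A(s,ℓ,m) ≤ C(ℓ,s) q^(ℓm - (ℓ-s)(m-s))`, and in particular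
`A(s,ℓ,m) ≤ 2^ℓ q^(ℓm - (ℓ-s)(m-s))`. -/
theorem stmt_14 (q s l m : ℕ) (hq2 : 2 ≤ q)
    (F : Type) [Field F] [Fintype F] (hq : Fintype.card F = q)
    (hsl : s ≤ l) (hsm : s ≤ m) :
    (Nat.card {M : Matrix (Fin l) (Fin m) F // M.rank = s} : ℝ) ≤
        (l.choose s : ℝ) * (q : ℝ) ^ ((l : ℤ) * m - ((l : ℤ) - s) * ((m : ℤ) - s)) ∧
      (Nat.card {M : Matrix (Fin l) (Fin m) F // M.rank = s} : ℝ) ≤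
        2 ^ l * (q : ℝ) ^ ((l : ℤ) * m - ((l : ℤ) - s) * ((m : ℤ) - s)) := by
  classical
  -- main counting bound in ℕ
  have main : Nat.card {M : Matrix (Fin l) (Fin m) F // M.rank = s} ≤
      l.choose s * q ^ (s * m + (l - s) * s) := by
    rw [Nat.card_eq_fintype_card, Fintype.card_subtype]
    have hsubset : (Finset.univ.filter (fun M : Matrix (Fin l) (Fin m) F => M.rank = s)) ⊆
        (Finset.univ.filter (fun T : Finset (Fin l) => T.card = s)).biUnion
          (fun T => Finset.univ.filter
            (fun M : Matrix (Fin l) (Fin m) F =>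
              ∀ i, M i ∈ Submodule.span F (M '' (T : Set (Fin l))))) := by
      intro M hM
      rw [Finset.mem_filter] at hM
      obtain ⟨T, hT1, hT2⟩ := aux_exists_spanning_rows M hM.2
      rw [Finset.mem_biUnion]
      exact ⟨T, by simp [hT1], by simp [hT2]⟩
    calc (Finset.univ.filter (fun M : Matrix (Fin l) (Fin m) F => M.rank = s)).card
        ≤ ((Finset.univ.filter (fun T : Finset (Fin l) => T.card = s)).biUnion
            (fun T => Finset.univ.filter
              (fun M : Matrix (Fin l) (Fin m) F =>
                ∀ i, M i ∈ Submodule.span F (M '' (T : Set (Fin l)))))).card :=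
          Finset.card_le_card hsubset
      _ ≤ ∑ T ∈ Finset.univ.filter (fun T : Finset (Fin l) => T.card = s),
            (Finset.univ.filter
              (fun M : Matrix (Fin l) (Fin m) F =>
                ∀ i, M i ∈ Submodule.span F (M '' (T : Set (Fin l))))).card :=
          Finset.card_biUnion_le
      _ ≤ ∑ T ∈ Finset.univ.filter (fun T : Finset (Fin l) => T.card = s),
            q ^ (s * m + (l - s) * s) := by
          refine Finset.sum_le_sum fun T hT => ?_
          rw [Finset.mem_filter] at hT
          have h2 := aux_card_span_le (m := m) hq T hT.2 hsl
          rw [Nat.card_eq_fintype_card, Fintype.card_subtype] at h2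
          convert h2 using 2
      _ = l.choose s * q ^ (s * m + (l - s) * s) := by
          rw [Finset.sum_const, smul_eq_mul]
          congr 1
          rw [← Fintype.card_subtype, Fintype.card_finset_len, Fintype.card_fin]
  -- convert the exponent
  have hexp : ((l : ℤ) * m - ((l : ℤ) - s) * ((m : ℤ) - s)) = ((s * m + (l - s) * s : ℕ) : ℤ) := by
    push_cast [Nat.cast_sub hsl]
    ring
  have hmainR : (Nat.card {M : Matrix (Fin l) (Fin m) F // M.rank = s} : ℝ) ≤
      (l.choose s : ℝ) * (q : ℝ) ^ ((l : ℤ) * m - ((l : ℤ) - s) * ((m : ℤ) - s)) := by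
    rw [hexp, zpow_natCast]
    exact_mod_cast main
  refine ⟨hmainR, hmainR.trans ?_⟩
  have hchoose : (l.choose s : ℝ) ≤ 2 ^ l := by
    have : l.choose s ≤ 2 ^ l := by
      rcases le_or_gt s l with h | h
      · calc l.choose s ≤ ∑ i ∈ Finset.range (l + 1), l.choose i :=
            Finset.single_le_sum (fun i _ => Nat.zero_le _)
              (Finset.mem_range.mpr (Nat.lt_succ_of_le h))
          _ = 2 ^ l := Nat.sum_range_choose l
      · simp [Nat.choose_eq_zero_of_lt h]
    exact_mod_cast this
  have hqpos : (0 : ℝ) < (q : ℝ) ^ ((l : ℤ) * m - ((l : ℤ) - s) * ((m : ℤ) - s)) := by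
    apply zpow_pos
    exact_mod_cast Nat.lt_of_lt_of_le Nat.zero_lt_two hq2
  exact mul_le_mul_of_nonneg_right hchoose hqpos.le
end

section
/- Let q ≥ 2 be a prime power and let λ, ω ∈ (0,1) be real numbers with λω < 1 − λ. For each integer N ≥ 1 set ℓ_N = ⌈λN⌉, m_N = N − ℓ_N, and s_N = ⌈ω·ℓ_N⌉, and let A_N denote the number of ℓ_N × m_N matrices with entries in 𝔽_q whose rank equals s_N (this is well defined, i.e. s_N ≤ min(ℓ_N, m_N), for all sufficiently large N). Then lim_{N→∞} log_q(A_N) / (N·ℓ_N) = ω − λω². -/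
section Aux

open Matrix

set_option linter.unusedSectionVars false
variable {F : Type} [Field F] [Fintype F]

/-- Left-cancellation for matrices with linearly independent columns. -/
lemma col_indep_cancel {l s w : ℕ} (B : Matrix (Fin l) (Fin s) F)
    (hB : LinearIndependent F Bᵀ) (X Y : Matrix (Fin s) (Fin w) F)
    (h : B * X = B * Y) : X = Y := by
  ext k j
  have hcol : ∀ i, ∑ t, B i t * X t j = ∑ t, B i t * Y t j := by
    intro i
    have := congrFun (congrFun h i) j
    simpa [Matrix.mul_apply] using this
  have hz : ∑ t, (X t j - Y t j) • Bᵀ t = 0 := by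
    funext i
    simp only [Finset.sum_apply, Pi.smul_apply, Matrix.transpose_apply, smul_eq_mul,
      Pi.zero_apply]
    have h2 : ∑ t, X t j * B i t = ∑ t, Y t j * B i t := by
      simpa [mul_comm] using hcol i
    simp [sub_mul, Finset.sum_sub_distrib, h2]
  exact sub_eq_zero.mp (Fintype.linearIndependent_iff.mp hB _ hz k)

lemma rank_of_col_indep {l s : ℕ} (B : Matrix (Fin l) (Fin s) F)
    (hB : LinearIndependent F Bᵀ) : B.rank = s := by
  rw [Matrix.rank_eq_finrank_span_cols, finrank_span_eq_card (show LinearIndependent F B.col from hB), Fintype.card_fin]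

lemma aux_prod (q k n : ℕ) (hq : 2 ≤ q) (hk : k ≤ n) :
    q ^ ((n-1)*k) ≤ ∏ i : Fin k, (q^n - q^(i:ℕ)) := by
  calc q ^ ((n-1)*k) = ∏ _i : Fin k, q^(n-1) := by
        rw [Finset.prod_const, Finset.card_univ, Fintype.card_fin, ← pow_mul]
    _ ≤ ∏ i : Fin k, (q^n - q^(i:ℕ)) := by
        apply Finset.prod_le_prod'
        intro i _
        have hn : 1 ≤ n := by have := i.2; omega
        have h1 : q^(i:ℕ) ≤ q^(n-1) :=
          Nat.pow_le_pow_right (by omega) (by omega)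
        have h2 : q^(n-1) * 2 ≤ q^n := by
          calc q^(n-1) * 2 ≤ q^(n-1) * q := Nat.mul_le_mul_left _ hq
            _ = q^n := by rw [← pow_succ]; congr 1; omega
        omega

lemma exists_decomp {l m s : ℕ} (M : Matrix (Fin l) (Fin m) F) (hM : M.rank = s) :
    ∃ (B : Matrix (Fin l) (Fin s) F) (C : Matrix (Fin s) (Fin m) F),
      LinearIndependent F Bᵀ ∧ B * C = M := by
  set V := LinearMap.range M.mulVecLin with hV
  have hfin : Module.finrank F V = s := hM
  let b : Module.Basis (Fin s) F V := Module.finBasisOfFinrankEq F V hfin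
  have hcolmem : ∀ j, Mᵀ j ∈ V := by
    intro j
    exact ⟨Pi.single j 1, by ext i; simp [Matrix.mulVecLin_apply, Matrix.mulVec_single]⟩
  refine ⟨Matrix.of (fun i k => (b k : Fin l → F) i),
    Matrix.of (fun k j => b.repr ⟨Mᵀ j, hcolmem j⟩ k), ?_, ?_⟩
  · have he : (Matrix.of (fun i k => (b k : Fin l → F) i))ᵀ = (V.subtype) ∘ b := rfl
    rw [he]
    exact b.linearIndependent.map' V.subtype V.ker_subtype
  · ext i j
    rw [Matrix.mul_apply]
    have := congrFun (congrArg Subtype.val (b.sum_repr ⟨Mᵀ j, hcolmem j⟩)) i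
    simp only [AddSubmonoidClass.coe_finset_sum, Finset.sum_apply] at this
    simp only [Matrix.of_apply]
    rw [show M i j = Mᵀ j i from rfl, ← this]
    apply Finset.sum_congr rfl
    intro k _
    simp [mul_comm]

lemma card_rank_upper {l m s : ℕ} :
    Nat.card {M : Matrix (Fin l) (Fin m) F // M.rank = s} * Fintype.card F ^ (s*(s-1))
      ≤ Fintype.card F ^ (l*s) * Fintype.card F ^ (s*m) := by
  classical
  set q := Fintype.card F with hq
  have hq2 : 2 ≤ q := Fintype.one_lt_card
  choose B C hind hmul using
    fun x : {M : Matrix (Fin l) (Fin m) F // M.rank = s} => exists_decomp x.1 x.2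
  set Φ : {M : Matrix (Fin l) (Fin m) F // M.rank = s} × GL (Fin s) F →
      Matrix (Fin l) (Fin s) F × Matrix (Fin s) (Fin m) F :=
    fun p => (B p.1 * (p.2 : Matrix (Fin s) (Fin s) F),
      ((p.2⁻¹ : GL (Fin s) F) : Matrix (Fin s) (Fin s) F) * C p.1) with hΦ
  have hrec : ∀ p, (Φ p).1 * (Φ p).2 = p.1.1 := by
    intro p
    simp only [hΦ]
    rw [Matrix.mul_assoc, ← Matrix.mul_assoc (p.2 : Matrix (Fin s) (Fin s) F)]
    have : (p.2 : Matrix (Fin s) (Fin s) F) * ((p.2⁻¹ : GL (Fin s) F) : Matrix (Fin s) (Fin s) F)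
        = 1 := p.2.mul_inv
    rw [this, Matrix.one_mul, hmul]
  have hinj : Function.Injective Φ := by
    rintro ⟨x, G⟩ ⟨y, G'⟩ hpq
    have hM : x = y := by
      apply Subtype.ext
      rw [← hrec ⟨x, G⟩, ← hrec ⟨y, G'⟩, hpq]
    subst hM
    have h1 : (Φ (x, G)).1 = (Φ (x, G')).1 := by rw [hpq]
    simp only [hΦ] at h1
    have := col_indep_cancel (B x) (hind x) _ _ h1
    have hGG : G = G' := Units.ext this
    rw [hGG]
  have hcard := Nat.card_le_card_of_injective Φ hinj
  rw [Nat.card_prod, Nat.card_prod] at hcard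
  have hm1 : Nat.card (Matrix (Fin l) (Fin s) F) = q ^ (l*s) := by
    rw [show Matrix (Fin l) (Fin s) F = (Fin l → Fin s → F) from rfl, Nat.card_fun, Nat.card_fun]
    simp only [Nat.card_eq_fintype_card, Fintype.card_fin]
    rw [← pow_mul, mul_comm s l]
  have hm2 : Nat.card (Matrix (Fin s) (Fin m) F) = q ^ (s*m) := by
    rw [show Matrix (Fin s) (Fin m) F = (Fin s → Fin m → F) from rfl, Nat.card_fun, Nat.card_fun]
    simp only [Nat.card_eq_fintype_card, Fintype.card_fin]
    rw [← pow_mul, mul_comm m s]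
  have hGL : q ^ (s*(s-1)) ≤ Nat.card (GL (Fin s) F) := by
    rw [Matrix.card_GL_field, mul_comm]
    exact aux_prod q s s hq2 le_rfl
  calc Nat.card {M : Matrix (Fin l) (Fin m) F // M.rank = s} * q ^ (s*(s-1))
      ≤ Nat.card {M : Matrix (Fin l) (Fin m) F // M.rank = s} * Nat.card (GL (Fin s) F) := by
        exact Nat.mul_le_mul_left _ hGL
    _ ≤ q ^ (l*s) * q ^ (s*m) := by rw [← hm1, ← hm2]; exact hcard

lemma card_rank_lower {l m s : ℕ} (hsl : s ≤ l) (hsm : s ≤ m) :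
    Fintype.card F ^ ((l-1)*s) * Fintype.card F ^ (s*(m-s))
      ≤ Nat.card {M : Matrix (Fin l) (Fin m) F // M.rank = s} := by
  classical
  set q := Fintype.card F with hqdef
  have hq2 : 2 ≤ q := Fintype.one_lt_card
  -- the auxiliary "column selection" matrix
  set E : Matrix (Fin m) (Fin s) F :=
    Matrix.of (fun j k => if (j:ℕ) = (k:ℕ) then 1 else 0) with hE
  have hBmat : ∀ (v : Fin s → Fin l → F),
      (Matrix.of (fun i k => v k i))ᵀ = v := fun v => rfl
  set Cx : Matrix (Fin s) (Fin (m-s)) F → Matrix (Fin s) (Fin m) F :=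
    fun X => Matrix.of (fun k j => if h : (j:ℕ) < s then (if (k:ℕ) = (j:ℕ) then 1 else 0)
      else X k ⟨(j:ℕ) - s, by omega⟩) with hCx
  have hCE : ∀ X, Cx X * E = 1 := by
    intro X
    ext k k'
    rw [Matrix.mul_apply]
    have hk' : ((k':ℕ) : ℕ) < m := lt_of_lt_of_le k'.2 hsm
    rw [Finset.sum_eq_single (⟨(k':ℕ), hk'⟩ : Fin m)]
    · simp only [hCx, hE, Matrix.of_apply, k'.2, dif_pos, if_pos rfl, mul_one,
        Matrix.one_apply]
      simp [Fin.ext_iff]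
    · intro j _ hj
      have : ((j:ℕ) : ℕ) ≠ (k':ℕ) := by
        intro hc; exact hj (Fin.ext hc)
      simp [hE, this]
    · intro hmem; exact absurd (Finset.mem_univ _) hmem
  set Ψ : {v : Fin s → Fin l → F // LinearIndependent F v} × Matrix (Fin s) (Fin (m-s)) F →
      {M : Matrix (Fin l) (Fin m) F // M.rank = s} := by
    refine fun p => ⟨Matrix.of (fun i k => p.1.1 k i) * Cx p.2, ?_⟩
    set B := Matrix.of (fun i k => p.1.1 k i)
    have hBrank : B.rank = s := rank_of_col_indep B (by rw [hBmat]; exact p.1.2)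
    have hBE : (B * Cx p.2) * E = B := by rw [Matrix.mul_assoc, hCE, Matrix.mul_one]
    refine le_antisymm ?_ ?_
    · calc (B * Cx p.2).rank ≤ B.rank := Matrix.rank_mul_le_left B (Cx p.2)
        _ = s := hBrank
    · calc s = B.rank := hBrank.symm
        _ = ((B * Cx p.2) * E).rank := by rw [hBE]
        _ ≤ (B * Cx p.2).rank := Matrix.rank_mul_le_left _ E
  have hinj : Function.Injective Ψ := by
    rintro ⟨⟨v, hv⟩, X⟩ ⟨⟨v', hv'⟩, X'⟩ hpq
    have hM : Matrix.of (fun i k => v k i) * Cx X = Matrix.of (fun i k => v' k i) * Cx X' :=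
      congrArg Subtype.val hpq
    have hB : Matrix.of (fun i k => v k i) = Matrix.of (fun i k => v' k i) := by
      have := congrArg (fun Z => Z * E) hM
      simpa only [Matrix.mul_assoc, hCE, Matrix.mul_one] using this
    have hvv : v = v' := by
      funext k i
      exact congrFun (congrFun (congrArg Matrix.transpose hB) k) i
    have hCxeq : Cx X = Cx X' := by
      apply col_indep_cancel (Matrix.of (fun i k => v k i)) (by rw [hBmat]; exact hv)
      rw [hM, hB]
    have hXX : X = X' := by
      funext k j
      have hjm : s + (j:ℕ) < m := by omega
      have := congrFun (congrFun hCxeq k) ⟨s + (j:ℕ), hjm⟩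
      simp only [hCx, Matrix.of_apply] at this
      rw [dif_neg (by omega), dif_neg (by omega)] at this
      simpa using this
    simp [hvv, hXX]
  have hcard := Nat.card_le_card_of_injective Ψ hinj
  rw [Nat.card_prod] at hcard
  have hLI : Nat.card {v : Fin s → Fin l → F // LinearIndependent F v}
      = ∏ i : Fin s, (q^l - q^(i:ℕ)) := by
    have hrk : s ≤ Module.finrank F (Fin l → F) := by
      rw [Module.finrank_fintype_fun_eq_card, Fintype.card_fin]; exact hsl
    rw [card_linearIndependent hrk, Module.finrank_fintype_fun_eq_card, Fintype.card_fin]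
  have hMX : Nat.card (Matrix (Fin s) (Fin (m-s)) F) = q ^ (s*(m-s)) := by
    rw [show Matrix (Fin s) (Fin (m-s)) F = (Fin s → Fin (m-s) → F) from rfl,
      Nat.card_fun, Nat.card_fun]
    simp only [Nat.card_eq_fintype_card, Fintype.card_fin]
    rw [← pow_mul, mul_comm (m-s) s]
  calc q ^ ((l-1)*s) * q ^ (s*(m-s))
      ≤ (∏ i : Fin s, (q^l - q^(i:ℕ))) * q ^ (s*(m-s)) :=
        Nat.mul_le_mul_right _ (aux_prod q s l hq2 hsl)
    _ ≤ Nat.card {M : Matrix (Fin l) (Fin m) F // M.rank = s} := by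
        rw [← hLI, ← hMX]; exact hcard

open Filter Real in
lemma squeeze_main (q : ℕ) (hq2 : 2 ≤ q) (lam ω : ℝ)
    (hlam0 : 0 < lam) (hlam1 : lam < 1) (hω0 : 0 < ω) (hω1 : ω < 1)
    (L S A : ℕ → ℕ)
    (hLlow : ∀ N : ℕ, lam * N ≤ L N)
    (hLhigh : ∀ N : ℕ, (L N : ℝ) ≤ lam * N + 1)
    (hSlow : ∀ N : ℕ, ω * L N ≤ S N)
    (hShigh : ∀ N : ℕ, (S N : ℝ) ≤ ω * L N + 1)
    (hLN : ∀ N : ℕ, L N ≤ N)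
    (hSm : ∀ᶠ N : ℕ in atTop, S N ≤ N - L N)
    (hlow : ∀ᶠ N : ℕ in atTop,
      q^((L N - 1)*S N) * q^(S N*((N - L N) - S N)) ≤ A N)
    (hhigh : ∀ N : ℕ, A N * q^(S N*(S N - 1)) ≤ q^(L N * S N) * q^(S N * (N - L N))) :
    Tendsto (fun N : ℕ => Real.logb q (A N) / ((N : ℝ) * (L N : ℝ)))
      atTop (nhds (ω - lam * ω ^ 2)) := by
  have hq1 : (1:ℝ) < (q:ℝ) := by exact_mod_cast hq2
  have hq0 : (0:ℝ) < (q:ℝ) := by linarith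
  have hN1 : ∀ᶠ N : ℕ in atTop, 1 ≤ N := eventually_ge_atTop 1
  have hL1 : ∀ᶠ N : ℕ in atTop, 1 ≤ L N := by
    filter_upwards [hN1] with N hN
    have h1 : lam * 1 ≤ lam * N := by
      apply mul_le_mul_of_nonneg_left _ hlam0.le
      exact_mod_cast hN
    have : (0:ℝ) < L N := lt_of_lt_of_le (by linarith) (hLlow N)
    exact_mod_cast Nat.one_le_iff_ne_zero.mpr (by exact_mod_cast this.ne' : (L N) ≠ 0)
  -- limit of L N / N
  have hx : Tendsto (fun N : ℕ => (L N : ℝ) / N) atTop (nhds lam) := by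
    apply tendsto_of_tendsto_of_tendsto_of_le_of_le' (g := fun _ : ℕ => lam)
      (h := fun N : ℕ => lam + 1 / N) tendsto_const_nhds
    · simpa using (tendsto_const_nhds (x := lam)).add (tendsto_one_div_atTop_nhds_zero_nat : Tendsto (fun n : ℕ => 1 / (n:ℝ)) atTop (nhds 0))
    · filter_upwards [hN1] with N hN
      have hN0 : (0:ℝ) < N := by exact_mod_cast hN
      rw [le_div_iff₀ hN0]
      exact hLlow N
    · filter_upwards [hN1] with N hN
      have hN0 : (0:ℝ) < N := by exact_mod_cast hN
      rw [div_le_iff₀ hN0]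
      calc (L N : ℝ) ≤ lam * N + 1 := hLhigh N
        _ = (lam + 1/N) * N := by field_simp
  -- limit of S N / N
  have hy : Tendsto (fun N : ℕ => (S N : ℝ) / N) atTop (nhds (lam * ω)) := by
    apply tendsto_of_tendsto_of_tendsto_of_le_of_le'
      (g := fun N : ℕ => ω * ((L N : ℝ) / N)) (h := fun N : ℕ => ω * ((L N : ℝ) / N) + 1 / N)
    · have := hx.const_mul ω
      simpa [mul_comm] using this
    · have h1 := (hx.const_mul ω).add tendsto_one_div_atTop_nhds_zero_nat
      simpa [mul_comm] using h1
    · filter_upwards [hN1] with N hN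
      have hN0 : (0:ℝ) < N := by exact_mod_cast hN
      rw [mul_div_assoc'] at *
      rw [div_le_div_iff_of_pos_right hN0]
      exact hSlow N
    · filter_upwards [hN1] with N hN
      have hN0 : (0:ℝ) < N := by exact_mod_cast hN
      rw [div_le_iff₀ hN0]
      calc (S N : ℝ) ≤ ω * L N + 1 := hShigh N
        _ = (ω * ((L N:ℝ) / N) + 1/N) * N := by field_simp
  -- lower and upper comparison sequences
  apply tendsto_of_tendsto_of_tendsto_of_le_of_le'
    (g := fun N : ℕ => (((L N - 1)*S N + S N*((N - L N) - S N) : ℕ) : ℝ) / ((N:ℝ) * L N))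
    (h := fun N : ℕ => (((L N * S N + S N * (N - L N) : ℕ) : ℝ)
      - ((S N*(S N - 1) : ℕ) : ℝ)) / ((N:ℝ) * L N))
  · -- lower sequence tends to the limit
    have hcongr : ∀ᶠ N : ℕ in atTop,
        (((S N:ℝ)/N) * (1 - (S N:ℝ)/N) - ((S N:ℝ)/N) * (1/N)) / ((L N : ℝ)/N)
          = (((L N - 1)*S N + S N*((N - L N) - S N) : ℕ) : ℝ) / ((N:ℝ) * L N) := by
      filter_upwards [hN1, hL1, hSm] with N h1 h2 h3
      have hN0 : (0:ℝ) < N := by exact_mod_cast h1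
      have hL0 : (0:ℝ) < L N := by exact_mod_cast h2
      have c1 : ((L N - 1 : ℕ) : ℝ) = (L N : ℝ) - 1 := by
        rw [Nat.cast_sub h2]; norm_num
      have c2 : ((N - L N : ℕ) : ℝ) = (N : ℝ) - L N := by
        rw [Nat.cast_sub (hLN N)]
      have c3 : (((N - L N) - S N : ℕ) : ℝ) = (N : ℝ) - L N - S N := by
        rw [Nat.cast_sub h3, c2]
      push_cast [c1, c3]
      field_simp
      ring
    apply Tendsto.congr' hcongr
    have hnum : Tendsto (fun N : ℕ =>
        ((S N:ℝ)/N) * (1 - (S N:ℝ)/N) - ((S N:ℝ)/N) * (1/N)) atTop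
        (nhds ((lam*ω) * (1 - lam*ω) - (lam*ω) * 0)) :=
      (hy.mul (tendsto_const_nhds.sub hy)).sub
        (hy.mul tendsto_one_div_atTop_nhds_zero_nat)
    have := hnum.div hx (ne_of_gt hlam0)
    have heq : ((lam*ω) * (1 - lam*ω) - (lam*ω) * 0) / lam = ω - lam * ω ^ 2 := by
      field_simp; ring
    rwa [heq] at this
  · -- upper sequence tends to the limit
    have hcongr : ∀ᶠ N : ℕ in atTop,
        (((S N:ℝ)/N) * (1 - (S N:ℝ)/N) + ((S N:ℝ)/N) * (1/N)) / ((L N : ℝ)/N)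
          = (((L N * S N + S N * (N - L N) : ℕ) : ℝ)
              - ((S N*(S N - 1) : ℕ) : ℝ)) / ((N:ℝ) * L N) := by
      filter_upwards [hN1, hL1, hSm] with N h1 h2 h3
      have hN0 : (0:ℝ) < N := by exact_mod_cast h1
      have hL0 : (0:ℝ) < L N := by exact_mod_cast h2
      have c2 : ((N - L N : ℕ) : ℝ) = (N : ℝ) - L N := by
        rw [Nat.cast_sub (hLN N)]
      rcases Nat.eq_zero_or_pos (S N) with hS0 | hS1
      · simp [hS0]
      · have c4 : ((S N*(S N - 1) : ℕ) : ℝ) = (S N : ℝ) * ((S N : ℝ) - 1) := by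
          rw [Nat.cast_mul, Nat.cast_sub hS1]; norm_num
        push_cast [c2, c4]
        field_simp
        ring
    apply Tendsto.congr' hcongr
    have hnum : Tendsto (fun N : ℕ =>
        ((S N:ℝ)/N) * (1 - (S N:ℝ)/N) + ((S N:ℝ)/N) * (1/N)) atTop
        (nhds ((lam*ω) * (1 - lam*ω) + (lam*ω) * 0)) :=
      (hy.mul (tendsto_const_nhds.sub hy)).add
        (hy.mul tendsto_one_div_atTop_nhds_zero_nat)
    have := hnum.div hx (ne_of_gt hlam0)
    have heq : ((lam*ω) * (1 - lam*ω) + (lam*ω) * 0) / lam = ω - lam * ω ^ 2 := by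
      field_simp; ring
    rwa [heq] at this
  · -- lower bound on logb
    filter_upwards [hN1, hL1, hlow] with N h1 h2 h3
    have hN0 : (0:ℝ) < N := by exact_mod_cast h1
    have hL0 : (0:ℝ) < L N := by exact_mod_cast h2
    have hD : (0:ℝ) < (N:ℝ) * L N := by positivity
    rw [div_le_div_iff_of_pos_right hD]
    set e : ℕ := (L N - 1)*S N + S N*((N - L N) - S N) with he
    have hqe : q ^ e ≤ A N := by rw [he, pow_add]; exact h3
    have hA0 : 0 < A N := lt_of_lt_of_le (pow_pos (by omega) e) hqe
    have hle : ((q:ℝ))^e ≤ (A N : ℝ) := by exact_mod_cast hqe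
    have hlogb : (e : ℝ) ≤ Real.logb q (A N) := by
      have := (Real.logb_le_logb hq1 (by positivity) (by exact_mod_cast hA0)).mpr hle
      rwa [Real.logb_pow, Real.logb_self_eq_one hq1, mul_one] at this
    exact hlogb
  · -- upper bound on logb
    filter_upwards [hN1, hL1, hlow] with N h1 h2 h3
    have hN0 : (0:ℝ) < N := by exact_mod_cast h1
    have hL0 : (0:ℝ) < L N := by exact_mod_cast h2
    have hD : (0:ℝ) < (N:ℝ) * L N := by positivity
    rw [div_le_div_iff_of_pos_right hD]
    have hqe' : q ^ ((L N - 1)*S N + S N*((N - L N) - S N)) ≤ A N := by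
      rw [pow_add]; exact h3
    have hA0 : 0 < A N := lt_of_lt_of_le (pow_pos (by omega) _) hqe'
    have hcast : (A N : ℝ) * (q:ℝ)^(S N*(S N - 1)) ≤ (q:ℝ)^(L N * S N + S N * (N - L N)) := by
      rw [pow_add]
      exact_mod_cast hhigh N
    have hlog := (Real.logb_le_logb hq1 (by positivity) (by positivity)).mpr hcast
    rw [Real.logb_mul (by exact_mod_cast hA0.ne') (by positivity),
      Real.logb_pow, Real.logb_pow, Real.logb_self_eq_one hq1, mul_one, mul_one] at hlog
    push_cast
    push_cast at hlog
    linarith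

end Aux

open Filter in
/-- Asymptotics of the noise entropy in the symmetric network coding channel
SNC(λ,ω): with `ℓ_N = ⌈λN⌉`, `m_N = N - ℓ_N`, `s_N = ⌈ω ℓ_N⌉` and `A_N` the
number of `ℓ_N × m_N` matrices over `𝔽_q` of rank `s_N`,
`log_q(A_N)/(N ℓ_N) → ω - λω²` as `N → ∞`. -/
theorem stmt_15 (q : ℕ) (hq2 : 2 ≤ q)
    (F : Type) [Field F] [Fintype F] (hq : Fintype.card F = q)
    (lam ω : ℝ) (hlam : lam ∈ Set.Ioo (0 : ℝ) 1) (hω : ω ∈ Set.Ioo (0 : ℝ) 1)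
    (h : lam * ω < 1 - lam) :
    Filter.Tendsto (fun N : ℕ =>
        Real.logb q
            (Nat.card {M : Matrix (Fin ⌈lam * N⌉₊) (Fin (N - ⌈lam * N⌉₊)) F //
              M.rank = ⌈ω * (⌈lam * N⌉₊ : ℝ)⌉₊}) /
          ((N : ℝ) * (⌈lam * N⌉₊ : ℝ)))
      Filter.atTop (nhds (ω - lam * ω ^ 2)) := by
  obtain ⟨hlam0, hlam1⟩ := hlam
  obtain ⟨hω0, hω1⟩ := hω
  have hSm : ∀ᶠ N : ℕ in atTop, ⌈ω * (⌈lam * N⌉₊ : ℝ)⌉₊ ≤ N - ⌈lam * N⌉₊ := by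
    have ht : Tendsto (fun N : ℕ => (N:ℝ) * (1 - lam - lam*ω)) atTop atTop :=
      Tendsto.atTop_mul_const (by linarith) tendsto_natCast_atTop_atTop
    filter_upwards [ht.eventually_ge_atTop (ω + 2), eventually_ge_atTop 1] with N hN hN1
    have hc1 : (⌈lam * N⌉₊ : ℝ) < lam * N + 1 := Nat.ceil_lt_add_one (by positivity)
    have hc2 : (⌈ω * (⌈lam * N⌉₊:ℝ)⌉₊ : ℝ) < ω * ⌈lam * N⌉₊ + 1 :=
      Nat.ceil_lt_add_one (by positivity)
    have hc3 : lam * N ≤ (⌈lam * N⌉₊ : ℝ) := Nat.le_ceil _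
    have hLN : ⌈lam * N⌉₊ ≤ N :=
      Nat.ceil_le.mpr (by nlinarith [Nat.cast_nonneg (α := ℝ) N])
    have hc4 : ω * (⌈lam*N⌉₊:ℝ) ≤ ω*(lam*N+1) := mul_le_mul_of_nonneg_left hc1.le hω0.le
    have key : (⌈ω * (⌈lam*N⌉₊:ℝ)⌉₊ : ℝ) + ⌈lam*N⌉₊ ≤ (N:ℝ) := by nlinarith
    have hkey : ⌈ω * (⌈lam*N⌉₊:ℝ)⌉₊ + ⌈lam*N⌉₊ ≤ N := by exact_mod_cast key
    omega
  apply squeeze_main q hq2 lam ω hlam0 hlam1 hω0 hω1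
    (fun N => ⌈lam * N⌉₊) (fun N => ⌈ω * (⌈lam * N⌉₊ : ℝ)⌉₊)
    (fun N => Nat.card {M : Matrix (Fin ⌈lam * N⌉₊) (Fin (N - ⌈lam * N⌉₊)) F //
      M.rank = ⌈ω * (⌈lam * N⌉₊ : ℝ)⌉₊})
  · exact fun N => Nat.le_ceil _
  · exact fun N => (Nat.ceil_lt_add_one (by positivity)).le
  · exact fun N => Nat.le_ceil _
  · exact fun N => (Nat.ceil_lt_add_one (by positivity)).le
  · intro N
    exact Nat.ceil_le.mpr (by nlinarith [Nat.cast_nonneg (α := ℝ) N])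
  · exact hSm
  · filter_upwards [hSm] with N hN
    have hsl : ⌈ω * (⌈lam*N⌉₊:ℝ)⌉₊ ≤ ⌈lam*N⌉₊ :=
      Nat.ceil_le.mpr (by nlinarith [Nat.cast_nonneg (α := ℝ) ⌈lam*N⌉₊])
    have := card_rank_lower (F := F) hsl hN
    rwa [hq] at this
  · intro N
    have := card_rank_upper (F := F) (l := ⌈lam*N⌉₊) (m := N - ⌈lam*N⌉₊)
      (s := ⌈ω * (⌈lam*N⌉₊:ℝ)⌉₊)
    rwa [hq] at this
end
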